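/- arXiv:2110.15835 — 8 statements merged into one kernel-verified Lean document; each statement's English description precedes it below -/
import Mathlib

section
/- Fix integers 1 ≤ r < s ≤ t. Then there exists N > 0 such that for all integers n > N, D_{r,t}(n) ≥ D_{s,t}(n). -/
open Polynomial Finset

/-- `D r t n` is the number of parts congruent to `r` mod `t`, counted with
multiplicity, over all partitions of `n` into distinct parts. -/
def D (r t n : ℕ) : ℕ :=
  ∑ p ∈ Nat.Partition.distincts n,
    (Multiset.filter (fun j => j % t = r % t) p.parts).card

/-- number of subsets of `F` with sum `y` -/
def SSC (F : Finset ℕ) (y : ℕ) : ℕ :=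
  (F.powerset.filter (fun T => T.sum id = y)).card

/-- generating polynomial of subset sums -/
noncomputable def SP (F : Finset ℕ) : Polynomial ℤ :=
  ∏ k ∈ F, (1 + X ^ k)

lemma SP_coeff (F : Finset ℕ) (y : ℕ) : (SP F).coeff y = (SSC F y : ℤ) := by
  unfold SP SSC
  have h1 : ∏ k ∈ F, (1 + X ^ k : Polynomial ℤ)
      = ∑ T ∈ F.powerset, X ^ (T.sum id) := by
    simp_rw [add_comm (1 : Polynomial ℤ)]
    rw [Finset.prod_add]
    refine Finset.sum_congr rfl (fun T hT => ?_)
    rw [Finset.prod_const_one, mul_one]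
    rw [← Finset.prod_pow_eq_pow_sum]
    rfl
  rw [h1, Polynomial.finset_sum_coeff]
  rw [Finset.card_filter]
  push_cast
  refine Finset.sum_congr rfl (fun T _ => ?_)
  rw [Polynomial.coeff_X_pow]
  simp [eq_comm]

lemma telescope (i : ℕ) :
    (1 - X : Polynomial ℤ) * ∏ j ∈ Finset.range i, (1 + X ^ (2 ^ j)) = 1 - X ^ (2 ^ i) := by
  induction i with
  | zero => simp
  | succ i ih =>
    rw [Finset.prod_range_succ, ← mul_assoc, ih]
    have : (2:ℕ) ^ (i+1) = 2 ^ i + 2 ^ i := by ring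
    rw [this, pow_add]
    ring

lemma SP_union_disjoint (A B : Finset ℕ) (h : Disjoint A B) :
    SP (A ∪ B) = SP A * SP B := by
  unfold SP
  exact Finset.prod_union h

/-- the main polynomial identity -/
lemma main_id (n i : ℕ) (D0 : Finset ℕ)
    (hpw : ∀ j < i, 2 ^ j ≤ n ∧ 2 ^ j ∉ D0) :
    (1 - X : Polynomial ℤ) * SP ((Finset.Icc 1 n) \ D0)
      = (1 - X ^ (2 ^ i)) * SP (((Finset.Icc 1 n) \ D0) \ (Finset.range i).image (2 ^ ·)) := by
  set PW : Finset ℕ := (Finset.range i).image (2 ^ ·) with hPW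
  set F : Finset ℕ := (Finset.Icc 1 n) \ D0 with hF
  have hsub : PW ⊆ F := by
    intro x hx
    rw [hPW, Finset.mem_image] at hx
    obtain ⟨j, hj, rfl⟩ := hx
    rw [Finset.mem_range] at hj
    have := hpw j hj
    rw [hF, Finset.mem_sdiff, Finset.mem_Icc]
    exact ⟨⟨Nat.one_le_two_pow, this.1⟩, this.2⟩
  have hFsplit : F = PW ∪ (F \ PW) := by
    rw [Finset.union_sdiff_of_subset hsub]
  have hdisj : Disjoint PW (F \ PW) := Finset.disjoint_sdiff
  have hSPPW : (1 - X : Polynomial ℤ) * SP PW = 1 - X ^ (2 ^ i) := by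
    rw [← telescope i]
    congr 1
    unfold SP
    rw [hPW, Finset.prod_image]
    intro a _ b _ hab
    exact Nat.pow_right_injective (le_refl 2) hab
  calc (1 - X : Polynomial ℤ) * SP F
      = (1 - X) * (SP PW * SP (F \ PW)) := by
        rw [← SP_union_disjoint PW (F \ PW) hdisj, ← hFsplit]
    _ = ((1 - X) * SP PW) * SP (F \ PW) := by ring
    _ = (1 - X ^ (2 ^ i)) * SP (F \ PW) := by rw [hSPPW]

lemma coeff_extract (P R : Polynomial ℤ) (E y : ℕ) (hy : 1 ≤ y)
    (h : (1 - X) * P = (1 - X ^ E) * R) :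
    P.coeff y - P.coeff (y - 1) = R.coeff y - (if E ≤ y then R.coeff (y - E) else 0) := by
  have hL : ((1 - X : Polynomial ℤ) * P).coeff y = P.coeff y - P.coeff (y - 1) := by
    rw [sub_mul, one_mul, Polynomial.coeff_sub]
    congr 1
    conv_lhs => rw [show y = (y - 1) + 1 from (Nat.succ_pred_eq_of_pos hy).symm]
    exact coeff_X_mul P (y - 1)
  have hR : ((1 - X ^ E : Polynomial ℤ) * R).coeff y
      = R.coeff y - (if E ≤ y then R.coeff (y - E) else 0) := by
    rw [sub_mul, one_mul, Polynomial.coeff_sub, coeff_X_pow_mul']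
  rw [← hL, ← hR, h]

lemma SSC_zero (R' : Finset ℕ) (h0 : 0 ∉ R') : SSC R' 0 = 1 := by
  unfold SSC
  rw [show (R'.powerset.filter (fun T => T.sum id = 0)) = {∅} from ?_, Finset.card_singleton]
  ext T
  simp only [Finset.mem_filter, Finset.mem_powerset, Finset.mem_singleton]
  constructor
  · rintro ⟨hsub, hsum⟩
    by_contra hne
    obtain ⟨x, hx⟩ := Finset.nonempty_iff_ne_empty.2 hne
    have hx0 : x ≠ 0 := fun h => h0 (h ▸ hsub hx)
    have : x ≤ T.sum id := Finset.single_le_sum (fun i _ => Nat.zero_le i) hx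
    omega
  · rintro rfl; simp

lemma bump (R' : Finset ℕ) (E y : ℕ) (hE : 1 ≤ E) (hy : 1 ≤ y)
    (hcl : ∀ M ∈ R', M ≤ y → M + E ∈ R') : SSC R' y ≤ SSC R' (y + E) := by
  unfold SSC
  apply Finset.card_le_card_of_injOn (fun T => insert (T.sup id + E) (T.erase (T.sup id)))
  · intro T hT
    rw [Finset.mem_coe, Finset.mem_filter, Finset.mem_powerset] at hT ⊢
    obtain ⟨hsub, hsum⟩ := hT
    have hne : T.Nonempty := by
      rw [Finset.nonempty_iff_ne_empty]; rintro rfl; simp at hsum; omega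
    set M := T.sup id with hM
    have hMmem : M ∈ T := by
      obtain ⟨b, hb, hbe⟩ := Finset.exists_mem_eq_sup T hne id
      rw [hM, hbe]; exact hb
    have hMle : M ≤ y := hsum ▸ Finset.single_le_sum (fun i _ => Nat.zero_le (id i)) hMmem
    have hnotmem : M + E ∉ T.erase M := by
      intro hmem
      have := Finset.le_sup (f := id) (Finset.mem_of_mem_erase hmem)
      simp only [id] at this
      omega
    constructor
    · intro x hx
      rcases Finset.mem_insert.1 hx with rfl | hx
      · exact hcl M (hsub hMmem) hMle
      · exact hsub (Finset.mem_of_mem_erase hx)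
    · rw [Finset.sum_insert hnotmem]
      have h2 : (T.erase M).sum id + id M = T.sum id := Finset.sum_erase_add T id hMmem
      simp only [Function.id_def] at h2 hsum ⊢
      omega
  · intro T1 hT1 T2 hT2 heq
    simp only [Finset.mem_coe, Finset.mem_filter, Finset.mem_powerset] at hT1 hT2
    dsimp only at heq
    have key : ∀ T : Finset ℕ, T ⊆ R' → T.sum id = y →
        (insert (T.sup id + E) (T.erase (T.sup id))).sup id = T.sup id + E := by
      intro T hsub hsum
      rw [Finset.sup_insert]
      have h1 : (T.erase (T.sup id)).sup id ≤ T.sup id :=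
        Finset.sup_mono (Finset.erase_subset _ _)
      simp only [id] at h1 ⊢
      omega
    have hne1 : T1.Nonempty := by
      rw [Finset.nonempty_iff_ne_empty]; rintro rfl; simp at hT1; omega
    have hne2 : T2.Nonempty := by
      rw [Finset.nonempty_iff_ne_empty]; rintro rfl; simp at hT2; omega
    have hM1 : T1.sup id ∈ T1 := by
      obtain ⟨b, hb, hbe⟩ := Finset.exists_mem_eq_sup T1 hne1 id
      rw [hbe]; exact hb
    have hM2 : T2.sup id ∈ T2 := by
      obtain ⟨b, hb, hbe⟩ := Finset.exists_mem_eq_sup T2 hne2 id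
      rw [hbe]; exact hb
    have hsup : T1.sup id = T2.sup id := by
      have e1 := key T1 hT1.1 hT1.2
      have e2 := key T2 hT2.1 hT2.2
      have : T1.sup id + E = T2.sup id + E := by rw [← e1, ← e2, heq]
      omega
    have hni : ∀ T : Finset ℕ, T.sup id + E ∉ T.erase (T.sup id) := by
      intro T hmem
      have := Finset.le_sup (f := id) (Finset.mem_of_mem_erase hmem)
      simp only [id] at this
      omega
    have herase : T1.erase (T1.sup id) = T2.erase (T2.sup id) := by
      have h1 := Finset.erase_insert (hni T1)
      have h2 := Finset.erase_insert (hni T2)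
      rw [← h1, ← h2, heq, hsup]
    calc T1 = insert (T1.sup id) (T1.erase (T1.sup id)) := (Finset.insert_erase hM1).symm
      _ = insert (T2.sup id) (T2.erase (T2.sup id)) := by rw [herase, hsup]
      _ = T2 := Finset.insert_erase hM2

lemma step_core (n i a : ℕ) (ha : 1 ≤ a) (han : a + 1 ≤ n)
    (hpw : ∀ j < i, 2 ^ j ≤ n ∧ 2 ^ j ∉ ({a, a+1} : Finset ℕ))
    (hclose : ∀ M, 1 ≤ M → M ∉ (Finset.range i).image (2 ^ ·) →
      M + 2 ^ i ≠ a ∧ M + 2 ^ i ≠ a + 1)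
    (hbase : 2 ^ i = n - a →
      1 ≤ SSC ((Finset.Icc 1 n \ {a, a+1}) \ (Finset.range i).image (2 ^ ·)) (2 ^ i)) :
    SSC (Finset.Icc 1 n \ {a, a+1}) (n - a - 1)
      ≤ SSC (Finset.Icc 1 n \ {a, a+1}) (n - a) := by
  set PW := (Finset.range i).image (2 ^ ·) with hPWdef
  set F := Finset.Icc 1 n \ ({a, a+1} : Finset ℕ) with hFdef
  set R' := F \ PW with hRdef
  set E := 2 ^ i with hEdef
  set y := n - a with hydef
  have hy : 1 ≤ y := by omega
  have hyn : y ≤ n := by omega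
  have hid := main_id n i {a, a+1} hpw
  have hco := coeff_extract (SP F) (SP R') E y hy hid
  simp only [SP_coeff] at hco
  have h0R : (0:ℕ) ∉ R' := by
    rw [hRdef, hFdef]
    simp only [Finset.mem_sdiff, Finset.mem_Icc]
    omega
  have hE1 : 1 ≤ E := Nat.one_le_two_pow
  have hE2 : ∀ j < i, 2 ^ j < E := fun j hj => Nat.pow_lt_pow_right (by norm_num) hj
  clear_value PW F R' E y
  clear hid hydef hEdef
  by_cases hEy : E ≤ y
  · by_cases hE0 : y - E = 0
    · -- y = E : base witness case
      have hyE : y = E := by omega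
      have hb := hbase (by omega)
      have hz : SSC R' 0 = 1 := SSC_zero R' h0R
      rw [if_pos hEy, hE0, hz] at hco
      have : (1:ℤ) ≤ (SSC R' y : ℤ) := by
        rw [hyE]; exact_mod_cast hb
      omega
    · -- y > E : bump
      have hble : SSC R' (y - E) ≤ SSC R' y := by
        have hcl : ∀ M ∈ R', M ≤ y - E → M + E ∈ R' := by
          intro M hM hMle
          rw [hRdef, hFdef] at hM ⊢
          simp only [Finset.mem_sdiff, Finset.mem_Icc, Finset.mem_insert,
            Finset.mem_singleton] at hM ⊢
          obtain ⟨⟨⟨hM1, hMn⟩, hMa⟩, hMpw⟩ := hM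
          have hMnotpw : M ∉ PW := hMpw
          have hcl2 := hclose M hM1 hMnotpw
          refine ⟨⟨⟨by omega, by omega⟩, by tauto⟩, ?_⟩
          intro hmem
          rw [hPWdef, Finset.mem_image] at hmem
          obtain ⟨j, hj, hje⟩ := hmem
          rw [Finset.mem_range] at hj
          have := hE2 j hj
          omega
        have := bump R' E (y - E) hE1 (by omega) hcl
        rwa [Nat.sub_add_cancel hEy] at this
      rw [if_pos hEy] at hco
      have hc : (SSC R' (y-E) : ℤ) ≤ (SSC R' y : ℤ) := by exact_mod_cast hble
      omega
  · rw [if_neg hEy] at hco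
    omega

lemma not_pow_of_odd {x : ℕ} (hx : x % 2 = 1) (hx1 : x ≠ 1) (j : ℕ) : x ≠ 2 ^ j := by
  cases j with
  | zero => simpa using hx1
  | succ j =>
    rintro rfl
    rw [pow_succ] at hx
    omega

lemma three_ne_pow (j : ℕ) : (3:ℕ) ≠ 2 ^ j :=
  not_pow_of_odd (by norm_num) (by norm_num) j

lemma base_witness (n a i : ℕ) (hE8 : 8 ≤ 2 ^ i) (hEn : 2 ^ i ≤ n)
    (h3 : 3 ≠ a ∧ 3 ≠ a + 1) (hE3 : 2 ^ i - 3 ≠ a ∧ 2 ^ i - 3 ≠ a + 1) :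
    1 ≤ SSC ((Finset.Icc 1 n \ {a, a+1}) \ (Finset.range i).image (2 ^ ·)) (2 ^ i) := by
  have hi : i ≠ 0 := by rintro rfl; omega
  have hEeven : 2 ^ i % 2 = 0 := by
    obtain ⟨i', rfl⟩ := Nat.exists_eq_succ_of_ne_zero hi
    rw [pow_succ]; omega
  unfold SSC
  refine Nat.one_le_iff_ne_zero.2 (Finset.card_ne_zero_of_mem (a := {3, 2 ^ i - 3}) ?_)
  rw [Finset.mem_filter, Finset.mem_powerset]
  have hne : (3:ℕ) ≠ 2 ^ i - 3 := by omega
  constructor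
  · intro x hx
    simp only [Finset.mem_insert, Finset.mem_singleton] at hx
    simp only [Finset.mem_sdiff, Finset.mem_Icc, Finset.mem_insert, Finset.mem_singleton,
      Finset.mem_image, Finset.mem_range]
    rcases hx with rfl | rfl
    · refine ⟨⟨⟨by omega, by omega⟩, by tauto⟩, ?_⟩
      rintro ⟨j, _, hj⟩
      exact three_ne_pow j hj.symm
    · refine ⟨⟨⟨by omega, by omega⟩, by tauto⟩, ?_⟩
      rintro ⟨j, _, hj⟩
      exact not_pow_of_odd (by omega) (by omega) j hj.symm
  · rw [Finset.sum_insert (by simpa using hne), Finset.sum_singleton]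
    simp only [id]
    omega

lemma SSC_mono (a n : ℕ) (ha : 1 ≤ a) (han : a + 1 ≤ n) (hn : 9 ≤ n) :
    SSC (Finset.Icc 1 n \ {a, a+1}) (n - a - 1)
      ≤ SSC (Finset.Icc 1 n \ {a, a+1}) (n - a) := by
  rcases eq_or_lt_of_le ha with h1 | h2
  · -- a = 1 : direct bump, never blocked
    subst h1
    have hcl : ∀ M ∈ (Finset.Icc 1 n \ ({1, 1+1} : Finset ℕ)), M ≤ n - 2 →
        M + 1 ∈ (Finset.Icc 1 n \ ({1, 1+1} : Finset ℕ)) := by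
      intro M hM hle
      simp only [Finset.mem_sdiff, Finset.mem_Icc, Finset.mem_insert,
        Finset.mem_singleton] at hM ⊢
      omega
    have hb := bump (Finset.Icc 1 n \ ({1, 1+1} : Finset ℕ)) 1 (n - 2) le_rfl (by omega) hcl
    have h22 : n - 2 + 1 = n - 1 := by omega
    have h21 : n - 1 - 1 = n - 2 := by omega
    rw [h22] at hb
    rw [h21]
    exact hb
  · by_cases hpa : ∃ j, a = 2 ^ j
    · -- a is a power of two
      obtain ⟨i, rfl⟩ := hpa
      have hi0 : i ≠ 0 := by rintro rfl; norm_num at h2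
      apply step_core n i _ ha han
      · intro j hj
        have hlt : (2:ℕ) ^ j < 2 ^ i := Nat.pow_lt_pow_right (by norm_num) hj
        refine ⟨by omega, ?_⟩
        simp only [Finset.mem_insert, Finset.mem_singleton]
        omega
      · intro M hM1 hMpw
        refine ⟨by omega, ?_⟩
        intro hMeq
        have hM1' : M = 1 := by omega
        apply hMpw
        rw [Finset.mem_image]
        refine ⟨0, ?_, by omega⟩
        rw [Finset.mem_range]
        omega
      · intro hEb
        have hEn : 2 ^ i ≤ n := by omega
        have h5 : 5 ≤ 2 ^ i := by omega
        have h8 : 8 ≤ 2 ^ i := by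
          rcases Nat.lt_or_ge i 3 with h | h
          · interval_cases i <;> norm_num at h5
          · calc (8:ℕ) = 2 ^ 3 := rfl
              _ ≤ 2 ^ i := Nat.pow_le_pow_right (by norm_num) h
        exact base_witness n (2 ^ i) i h8 hEn ⟨by omega, by omega⟩ ⟨by omega, by omega⟩
    · by_cases hpa1 : ∃ j, a + 1 = 2 ^ j
      · -- a+1 is a power of two
        obtain ⟨i, hi⟩ := hpa1
        apply step_core n i _ ha han
        · intro j hj
          have hlt : (2:ℕ) ^ j < 2 ^ i := Nat.pow_lt_pow_right (by norm_num) hj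
          refine ⟨by omega, ?_⟩
          simp only [Finset.mem_insert, Finset.mem_singleton]
          rintro (hj2 | hj2)
          · exact hpa ⟨j, hj2.symm⟩
          · omega
        · intro M hM1 hMpw
          exact ⟨by omega, by omega⟩
        · intro hEb
          have hEn : 2 ^ i ≤ n := by omega
          have h5 : 5 ≤ 2 ^ i := by omega
          have h8 : 8 ≤ 2 ^ i := by
            rcases Nat.lt_or_ge i 3 with h | h
            · interval_cases i <;> norm_num at h5
            · calc (8:ℕ) = 2 ^ 3 := rfl
                _ ≤ 2 ^ i := Nat.pow_le_pow_right (by norm_num) h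
          exact base_witness n a i h8 hEn ⟨by omega, by omega⟩ ⟨by omega, by omega⟩
      · -- neither is a power of two
        apply step_core n (Nat.log 2 n + 1) _ ha han
        · intro j hj
          have hjle : j ≤ Nat.log 2 n := by omega
          have h1 : (2:ℕ) ^ j ≤ 2 ^ Nat.log 2 n := Nat.pow_le_pow_right (by norm_num) hjle
          have h2' : (2:ℕ) ^ Nat.log 2 n ≤ n := Nat.pow_log_le_self 2 (by omega)
          refine ⟨by omega, ?_⟩
          simp only [Finset.mem_insert, Finset.mem_singleton]
          rintro (hj2 | hj2)
          · exact hpa ⟨j, hj2.symm⟩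
          · exact hpa1 ⟨j, hj2.symm⟩
        · intro M hM1 hMpw
          have hbig : n < 2 ^ (Nat.log 2 n + 1) := Nat.lt_pow_succ_log_self (by norm_num) n
          exact ⟨by omega, by omega⟩
        · intro hEb
          have hbig : n < 2 ^ (Nat.log 2 n + 1) := Nat.lt_pow_succ_log_self (by norm_num) n
          omega

/-- number of distinct partitions of `n` containing part `x` -/
def g (n x : ℕ) : ℕ :=
  ((Nat.Partition.distincts n).filter (fun p => x ∈ p.parts)).card

lemma parts_le_n {n : ℕ} (p : Nat.Partition n) {x : ℕ} (hx : x ∈ p.parts) : x ≤ n := by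
  have := Multiset.single_le_sum (fun y hy => Nat.zero_le y) x hx
  rwa [p.parts_sum] at this

lemma mem_distincts_nodup {n : ℕ} {p : Nat.Partition n}
    (hp : p ∈ Nat.Partition.distincts n) : p.parts.Nodup := by
  rw [Nat.Partition.distincts, Finset.mem_filter] at hp
  exact hp.2

lemma nodup_toFinset_sum {n : ℕ} (p : Nat.Partition n) (h : p.parts.Nodup) :
    p.parts.toFinset.sum id = n := by
  have hval : p.parts.toFinset.val = p.parts := by
    rw [Multiset.toFinset_val, Multiset.dedup_eq_self.2 h]
  rw [Finset.sum]
  rw [hval, Multiset.map_id]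
  exact p.parts_sum

/-- The central bijection: distinct partitions of `n` containing `x` but not `o`
correspond to subsets of `Icc 1 n \ {x, o}` with sum `n - x`. -/
lemma bij_count (n x o : ℕ) (hx : 1 ≤ x) (hxn : x ≤ n) (hxo : x ≠ o) :
    ((Nat.Partition.distincts n).filter (fun p => x ∈ p.parts ∧ o ∉ p.parts)).card
      = SSC (Finset.Icc 1 n \ {x, o}) (n - x) := by
  unfold SSC
  refine Finset.card_bij' (fun p _ => p.parts.toFinset.erase x)
    (fun T hT => ⟨x ::ₘ T.val, ?_, ?_⟩) ?_ ?_ ?_ ?_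
  · -- parts_pos
    intro i hi
    rw [Finset.mem_filter, Finset.mem_powerset] at hT
    rcases Multiset.mem_cons.1 hi with rfl | hi
    · omega
    · have := hT.1 hi
      rw [Finset.mem_sdiff, Finset.mem_Icc] at this
      omega
  · -- parts_sum
    rw [Finset.mem_filter, Finset.mem_powerset] at hT
    rw [Multiset.sum_cons]
    have : T.val.sum = T.sum id := by
      rw [Finset.sum, Multiset.map_id]
    rw [this, hT.2]
    omega
  · -- i maps into target
    intro p hp
    rw [Finset.mem_filter] at hp
    obtain ⟨hpd, hpx, hpo⟩ := hp
    have hnd := mem_distincts_nodup hpd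
    rw [Finset.mem_filter, Finset.mem_powerset]
    constructor
    · intro y hy
      have hyne : y ≠ x := Finset.ne_of_mem_erase hy
      have hymem : y ∈ p.parts := Multiset.mem_toFinset.1 (Finset.mem_of_mem_erase hy)
      rw [Finset.mem_sdiff, Finset.mem_Icc]
      refine ⟨⟨p.parts_pos hymem, parts_le_n p hymem⟩, ?_⟩
      simp only [Finset.mem_insert, Finset.mem_singleton]
      push_neg
      exact ⟨hyne, fun h => hpo (h ▸ hymem)⟩
    · have hxT : x ∈ p.parts.toFinset := Multiset.mem_toFinset.2 hpx
      have h5 := Finset.sum_erase_add p.parts.toFinset id hxT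
      have hsum := nodup_toFinset_sum p hnd
      simp only [Function.id_def] at h5 hsum ⊢
      omega
  · -- j maps into source
    intro T hT
    rw [Finset.mem_filter, Finset.mem_powerset] at hT
    obtain ⟨hsub, hsum⟩ := hT
    have hxnotT : x ∉ T.val := by
      intro hmem
      have := hsub hmem
      rw [Finset.mem_sdiff] at this
      exact this.2 (by simp)
    rw [Finset.mem_filter]
    refine ⟨?_, ?_, ?_⟩
    · rw [Nat.Partition.distincts, Finset.mem_filter]
      exact ⟨Finset.mem_univ _, Multiset.nodup_cons.2 ⟨hxnotT, T.nodup⟩⟩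
    · exact Multiset.mem_cons_self x T.val
    · intro hmem
      rcases Multiset.mem_cons.1 hmem with h | h
      · exact hxo h.symm
      · have := hsub h
        rw [Finset.mem_sdiff] at this
        exact this.2 (by simp)
  · -- left inverse
    intro p hp
    rw [Finset.mem_filter] at hp
    obtain ⟨hpd, hpx, hpo⟩ := hp
    have hnd := mem_distincts_nodup hpd
    apply Nat.Partition.ext
    simp only
    rw [Finset.erase_val]
    have hval : p.parts.toFinset.val = p.parts := by
      rw [Multiset.toFinset_val, Multiset.dedup_eq_self.2 hnd]
    rw [hval]
    exact Multiset.cons_erase hpx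
  · -- right inverse
    intro T hT
    rw [Finset.mem_filter, Finset.mem_powerset] at hT
    have hxnotT : x ∉ T := by
      intro hmem
      have := hT.1 hmem
      rw [Finset.mem_sdiff] at this
      exact this.2 (by simp)
    simp only
    rw [Multiset.toFinset_cons, Finset.val_toFinset]
    exact Finset.erase_insert hxnotT

lemma g_step (n a : ℕ) (ha : 1 ≤ a) (hn : 9 ≤ n) : g n (a+1) ≤ g n a := by
  by_cases han : a + 1 ≤ n
  · have split : ∀ x o : ℕ,
        g n x = ((Nat.Partition.distincts n).filter
            (fun p => x ∈ p.parts ∧ o ∈ p.parts)).card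
          + ((Nat.Partition.distincts n).filter
            (fun p => x ∈ p.parts ∧ o ∉ p.parts)).card := by
      intro x o
      unfold g
      rw [Finset.card_filter, Finset.card_filter, Finset.card_filter,
        ← Finset.sum_add_distrib]
      refine Finset.sum_congr rfl (fun p _ => ?_)
      by_cases h1 : x ∈ p.parts <;> by_cases h2 : o ∈ p.parts <;> simp [h1, h2]
    rw [split (a+1) a, split a (a+1)]
    apply Nat.add_le_add
    · apply le_of_eq
      congr 1
      apply Finset.filter_congr
      intro p _
      exact and_comm
    · rw [bij_count n (a+1) a (by omega) han (by omega),
        bij_count n a (a+1) ha (by omega) (by omega)]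
      rw [Finset.pair_comm (a+1) a]
      have h1 : n - (a + 1) = n - a - 1 := by omega
      rw [h1]
      exact SSC_mono a n ha han hn
  · have : g n (a+1) = 0 := by
      unfold g
      rw [Finset.card_eq_zero, Finset.filter_eq_empty_iff]
      intro p _ hmem
      exact han (parts_le_n p hmem)
    omega

lemma g_chain (n a k : ℕ) (ha : 1 ≤ a) (hn : 9 ≤ n) : g n (a + k) ≤ g n a := by
  induction k with
  | zero => exact le_rfl
  | succ k ih =>
    calc g n (a + (k+1)) = g n ((a + k) + 1) := by ring_nf
      _ ≤ g n (a + k) := g_step n (a + k) (by omega) hn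
      _ ≤ g n a := ih

lemma D_eq (r t n : ℕ) :
    D r t n = ∑ x ∈ (Finset.Icc 1 n).filter (fun x => x % t = r % t), g n x := by
  unfold D g
  rw [Finset.sum_congr rfl (fun p hp => ?_), Finset.sum_comm]
  · exact Finset.sum_congr rfl (fun x _ => (Finset.card_filter _ _).symm)
  · -- rewrite each multiset filter card as a sum of indicators
    have hnd := mem_distincts_nodup hp
    have h1 : (Multiset.filter (fun j => j % t = r % t) p.parts).card
        = ((p.parts.toFinset).filter (fun j => j % t = r % t)).card := by
      rw [← Multiset.toFinset_filter]
      exact (Multiset.toFinset_card_of_nodup (Multiset.Nodup.filter _ hnd)).symm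
    rw [h1]
    have h2 : (p.parts.toFinset).filter (fun j => j % t = r % t)
        = ((Finset.Icc 1 n).filter (fun x => x % t = r % t)).filter
            (fun x => x ∈ p.parts) := by
      ext y
      simp only [Finset.mem_filter, Multiset.mem_toFinset, Finset.mem_Icc]
      constructor
      · rintro ⟨hy1, hy2⟩
        exact ⟨⟨⟨p.parts_pos hy1, parts_le_n p hy1⟩, hy2⟩, hy1⟩
      · tauto
    rw [h2]
    exact Finset.card_filter _ _

lemma mod_shift (r s t x : ℕ) (hr : 1 ≤ r) (hrs : r < s) (hst : s ≤ t)
    (hx : x % t = s % t) (hx1 : 1 ≤ x) :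
    s ≤ x ∧ (x - (s - r)) % t = r % t := by
  have hxs : s ≤ x := by
    rcases eq_or_lt_of_le hst with h | h
    · subst h
      have hss : s % s = 0 := Nat.mod_self s
      have h0 : x % s = 0 := by omega
      exact Nat.le_of_dvd (by omega) (Nat.dvd_of_mod_eq_zero h0)
    · have : s % t = s := Nat.mod_eq_of_lt h
      have := Nat.mod_le x t
      omega
  refine ⟨hxs, ?_⟩
  have hmodeq : x ≡ s [MOD t] := hx
  obtain ⟨m, hm⟩ := (Nat.modEq_iff_dvd' hxs).1 hmodeq.symm
  have hw : x - (s - r) = r + (x - s) := by omega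
  rw [hw, hm, Nat.add_mul_mod_self_left]

theorem stmt1 (r s t : ℕ) (hr : 1 ≤ r) (hrs : r < s) (hst : s ≤ t) :
    ∃ N : ℕ, 0 < N ∧ ∀ n : ℕ, N < n → D s t n ≤ D r t n := by
  refine ⟨8, by norm_num, fun n hn => ?_⟩
  have hn9 : 9 ≤ n := hn
  rw [D_eq s t n, D_eq r t n]
  set d := s - r with hd
  set ClsS := (Finset.Icc 1 n).filter (fun x => x % t = s % t) with hClsS
  set ClsR := (Finset.Icc 1 n).filter (fun x => x % t = r % t) with hClsR
  have hmem : ∀ x ∈ ClsS, s ≤ x ∧ (x - d) % t = r % t := by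
    intro x hx
    rw [hClsS, Finset.mem_filter, Finset.mem_Icc] at hx
    exact mod_shift r s t x hr hrs hst hx.2 hx.1.1
  calc ∑ x ∈ ClsS, g n x
      ≤ ∑ x ∈ ClsS, g n (x - d) := by
        apply Finset.sum_le_sum
        intro x hx
        obtain ⟨hsx, _⟩ := hmem x hx
        have hxd : (x - d) + d = x := by omega
        have hgc := g_chain n (x - d) d (by omega) hn9
        rwa [hxd] at hgc
    _ = ∑ y ∈ ClsS.image (fun x => x - d), g n y := by
        rw [Finset.sum_image]
        intro x hx y hy hxy
        obtain ⟨hsx, _⟩ := hmem x hx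
        obtain ⟨hsy, _⟩ := hmem y hy
        simp only at hxy
        omega
    _ ≤ ∑ y ∈ ClsR, g n y := by
        apply Finset.sum_le_sum_of_subset
        intro y hy
        rw [Finset.mem_image] at hy
        obtain ⟨x, hx, rfl⟩ := hy
        obtain ⟨hsx, hmod⟩ := hmem x hx
        rw [hClsS, Finset.mem_filter, Finset.mem_Icc] at hx
        rw [hClsR, Finset.mem_filter, Finset.mem_Icc]
        exact ⟨⟨by omega, by omega⟩, hmod⟩
end

section
/- For all integers t with 2 ≤ t ≤ 10, all integers r, s with 1 ≤ r < s ≤ t, and all integers n > 8, the inequality D_{r,t}(n) ≥ D_{s,t}(n) holds. -/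
namespace Stmt2Aux

open Finset

/-- Finset-world model of partitions into distinct parts. -/
def Omega (n : ℕ) : Finset (Finset ℕ) :=
  (Finset.range (n + 1)).powerset.filter fun s => 0 ∉ s ∧ s.sum id = n

lemma mem_Omega {n : ℕ} {s : Finset ℕ} :
    s ∈ Omega n ↔ (0 ∉ s ∧ s.sum id = n) := by
  constructor
  · intro h; exact (Finset.mem_filter.mp h).2
  · intro h
    refine Finset.mem_filter.mpr ⟨Finset.mem_powerset.mpr ?_, h⟩
    intro x hx
    have hle : id x ≤ s.sum id := Finset.single_le_sum (fun i _ => Nat.zero_le (id i)) hx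
    have h2 := h.2
    simp only [id] at hle h2
    exact Finset.mem_range.mpr (by omega)

/-- number of distinct partitions of `n` (finset model) containing `j`. -/
def cF (j n : ℕ) : ℕ := ((Omega n).filter fun s => j ∈ s).card

lemma cF_zero (n : ℕ) : cF 0 n = 0 := by
  unfold cF
  rw [Finset.card_eq_zero]
  ext s
  simp only [Finset.mem_filter, Finset.notMem_empty, iff_false, not_and]
  intro hs h0
  exact absurd h0 (mem_Omega.mp hs).1

def chainF (a : ℕ) : Finset ℕ := (Finset.range a).image (2 ^ ·)

lemma mem_chainF {a x : ℕ} : x ∈ chainF a ↔ ∃ c < a, 2 ^ c = x := by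
  simp [chainF]

lemma two_pow_notmem_chainF {a : ℕ} : 2 ^ a ∉ chainF a := by
  rw [mem_chainF]
  rintro ⟨c, hc, h⟩
  have := Nat.pow_right_injective (le_refl 2) h
  omega

lemma chainF_succ (a : ℕ) : chainF (a + 1) = insert (2 ^ a) (chainF a) := by
  simp [chainF, Finset.range_add_one]

lemma sum_chainF (a : ℕ) : (chainF a).sum id + 1 = 2 ^ a := by
  induction a with
  | zero => simp [chainF]
  | succ a ih =>
    rw [chainF_succ, Finset.sum_insert two_pow_notmem_chainF]
    have h1 : (1:ℕ) ≤ 2 ^ a := Nat.one_le_two_pow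
    have h2 : (2:ℕ) ^ (a + 1) = 2 ^ a * 2 := pow_succ 2 a
    simp only [id] at *
    omega

lemma pexp_ex (A : Finset ℕ) : ∃ c, 2 ^ c ∉ A := by
  refine ⟨A.sup id + 1, fun h => ?_⟩
  have h1 : id (2 ^ (A.sup id + 1)) ≤ A.sup id := Finset.le_sup h
  have h2 : A.sup id + 1 < 2 ^ (A.sup id + 1) := Nat.lt_two_pow_self
  simp only [id] at h1
  omega

/-- least exponent `a` with `2^a ∉ A`. -/
def pexp (A : Finset ℕ) : ℕ := Nat.find (pexp_ex A)

lemma pexp_spec (A : Finset ℕ) : 2 ^ pexp A ∉ A := Nat.find_spec (pexp_ex A)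

lemma pexp_min {A : Finset ℕ} {c : ℕ} (h : c < pexp A) : 2 ^ c ∈ A := by
  have := Nat.find_min (pexp_ex A) h
  simpa using this

lemma chainF_subset {A : Finset ℕ} : chainF (pexp A) ⊆ A := by
  intro x hx
  obtain ⟨c, hc, rfl⟩ := mem_chainF.mp hx
  exact pexp_min hc

/-- The injection: binary-carry adding one unit, after replacing the part `j+1` by `j`. -/
def phi (j : ℕ) (s : Finset ℕ) : Finset ℕ :=
  if j ∈ s then s
  else
    let A := s.erase (j + 1)
    let a := pexp A
    let B := A \ chainF a
    if 2 ^ a = j ∨ 2 ^ a = j + 1 then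
      if hB : B.Nonempty then
        insert j (insert (B.max' hB + 2 ^ a) (B.erase (B.max' hB)))
      else {j, 3, 2 ^ a - 3}
    else insert j (insert (2 ^ a) B)


lemma two_pow_ge_eight {a : ℕ} (h : 5 ≤ 2 ^ a) : 8 ≤ 2 ^ a := by
  rcases Nat.lt_or_ge a 3 with h3 | h3
  · have : 2 ^ a ≤ 2 ^ 2 := Nat.pow_le_pow_right (by norm_num) (by omega)
    norm_num at this
    omega
  · have : 2 ^ 3 ≤ 2 ^ a := Nat.pow_le_pow_right (by norm_num) h3
    norm_num at this
    omega

lemma phi_mem {n j : ℕ} (hn : 9 ≤ n) (hj : 1 ≤ j) {s : Finset ℕ}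
    (hs : s ∈ Omega n) (hj1 : j + 1 ∈ s) :
    phi j s ∈ Omega n ∧ j ∈ phi j s := by
  obtain ⟨h0, hsum⟩ := mem_Omega.mp hs
  by_cases hjs : j ∈ s
  · rw [phi, if_pos hjs]; exact ⟨hs, hjs⟩
  rw [phi, if_neg hjs]
  simp only []
  set A := s.erase (j + 1) with hA
  set a := pexp A with ha
  set B := A \ chainF a with hB
  have hAsum : A.sum id + (j + 1) = n := by
    have := Finset.sum_erase_add s id hj1
    simp only [id] at this hsum ⊢
    rw [hA]
    omega
  have hA0 : 0 ∉ A := fun h => h0 (Finset.mem_of_mem_erase h)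
  have hAj : j ∉ A := fun h => hjs (Finset.mem_of_mem_erase h)
  have hAj1 : j + 1 ∉ A := Finset.notMem_erase _ _
  have hBsum : B.sum id + (chainF a).sum id = A.sum id := by
    rw [hB]; exact Finset.sum_sdiff chainF_subset
  have hchsum : (chainF a).sum id + 1 = 2 ^ a := sum_chainF a
  have h2a : 2 ^ a ∉ A := pexp_spec A
  have hBsub : B ⊆ A := Finset.sdiff_subset
  have hB0 : 0 ∉ B := fun h => hA0 (hBsub h)
  have hBj : j ∉ B := fun h => hAj (hBsub h)
  have h2aB : 2 ^ a ∉ B := fun h => h2a (hBsub h)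
  have h2apos : (1:ℕ) ≤ 2 ^ a := Nat.one_le_two_pow
  by_cases hcase : 2 ^ a = j ∨ 2 ^ a = j + 1
  · rw [if_pos hcase]
    by_cases hBne : B.Nonempty
    · rw [dif_pos hBne]
      set m := B.max' hBne with hm
      have hmB : m ∈ B := B.max'_mem hBne
      have hm1 : 1 ≤ m := Nat.one_le_iff_ne_zero.mpr (fun h => hB0 (h ▸ hmB))
      have hma : m + 2 ^ a ∉ B.erase m := by
        intro h
        have := B.le_max' _ (Finset.mem_of_mem_erase h)
        omega
      have hjins : j ∉ insert (m + 2 ^ a) (B.erase m) := by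
        simp only [Finset.mem_insert]
        push_neg
        exact ⟨by omega, fun h => hBj (Finset.mem_of_mem_erase h)⟩
      have herase : (B.erase m).sum id + m = B.sum id := Finset.sum_erase_add _ _ hmB
      have hsum' : (insert j (insert (m + 2 ^ a) (B.erase m))).sum id = n := by
        rw [Finset.sum_insert hjins, Finset.sum_insert hma]
        simp only [id] at *
        omega
      refine ⟨mem_Omega.mpr ⟨?_, hsum'⟩, Finset.mem_insert_self _ _⟩
      simp only [Finset.mem_insert]
      push_neg
      exact ⟨by omega, by omega, fun h => hB0 (Finset.mem_of_mem_erase h)⟩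
    · rw [dif_neg hBne]
      have hAch : A = chainF a := by
        have h1 : A ⊆ chainF a := by
          intro x hx
          by_contra hx2
          exact hBne ⟨x, Finset.mem_sdiff.mpr ⟨hx, hx2⟩⟩
        exact Finset.Subset.antisymm h1 chainF_subset
      have hAsum2 : A.sum id + 1 = 2 ^ a := by rw [hAch]; exact hchsum
      have hn8 : 8 ≤ 2 ^ a := by
        apply two_pow_ge_eight
        omega
      have hj7 : 7 ≤ j := by omega
      have hne1 : (3:ℕ) ∉ ({2 ^ a - 3} : Finset ℕ) := by
        simp only [Finset.mem_singleton]
        omega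
      have hne2 : j ∉ insert 3 ({2 ^ a - 3} : Finset ℕ) := by
        simp only [Finset.mem_insert, Finset.mem_singleton]
        omega
      have hsum' : ({j, 3, 2 ^ a - 3} : Finset ℕ).sum id = n := by
        rw [show ({j, 3, 2 ^ a - 3} : Finset ℕ) = insert j (insert 3 {2 ^ a - 3}) from rfl,
          Finset.sum_insert hne2, Finset.sum_insert hne1, Finset.sum_singleton]
        simp only [id]
        omega
      refine ⟨mem_Omega.mpr ⟨?_, hsum'⟩, by simp⟩
      simp only [Finset.mem_insert, Finset.mem_singleton]
      push_neg
      omega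
  · rw [if_neg hcase]
    push_neg at hcase
    have h2ains : 2 ^ a ∉ B := h2aB
    have hjins : j ∉ insert (2 ^ a) B := by
      simp only [Finset.mem_insert]
      push_neg
      exact ⟨fun h => hcase.1 h.symm, hBj⟩
    have hsum' : (insert j (insert (2 ^ a) B)).sum id = n := by
      rw [Finset.sum_insert hjins, Finset.sum_insert h2ains]
      simp only [id] at *
      omega
    refine ⟨mem_Omega.mpr ⟨?_, hsum'⟩, Finset.mem_insert_self _ _⟩
    simp only [Finset.mem_insert]
    push_neg
    exact ⟨by omega, by omega, fun h => hB0 h⟩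


section CaseLemmas

variable {n j : ℕ} {s : Finset ℕ}

lemma phi_eq_case1 (hjs : j ∉ s)
    (hc : ¬(2 ^ pexp (s.erase (j + 1)) = j ∨ 2 ^ pexp (s.erase (j + 1)) = j + 1)) :
    phi j s = insert j (insert (2 ^ pexp (s.erase (j + 1)))
      (s.erase (j + 1) \ chainF (pexp (s.erase (j + 1))))) := by
  rw [phi, if_neg hjs]
  simp only []
  rw [if_neg hc]

lemma phi_eq_case2a (hjs : j ∉ s)
    (hc : 2 ^ pexp (s.erase (j + 1)) = j ∨ 2 ^ pexp (s.erase (j + 1)) = j + 1)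
    (hB : (s.erase (j + 1) \ chainF (pexp (s.erase (j + 1)))).Nonempty) :
    phi j s = insert j (insert
      ((s.erase (j + 1) \ chainF (pexp (s.erase (j + 1)))).max' hB + 2 ^ pexp (s.erase (j + 1)))
      ((s.erase (j + 1) \ chainF (pexp (s.erase (j + 1)))).erase
        ((s.erase (j + 1) \ chainF (pexp (s.erase (j + 1)))).max' hB))) := by
  rw [phi, if_neg hjs]
  simp only []
  rw [if_pos hc, dif_pos hB]

lemma phi_eq_case2b (hjs : j ∉ s)
    (hc : 2 ^ pexp (s.erase (j + 1)) = j ∨ 2 ^ pexp (s.erase (j + 1)) = j + 1)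
    (hB : ¬(s.erase (j + 1) \ chainF (pexp (s.erase (j + 1)))).Nonempty) :
    phi j s = {j, 3, 2 ^ pexp (s.erase (j + 1)) - 3} := by
  rw [phi, if_neg hjs]
  simp only []
  rw [if_pos hc, dif_neg hB]

lemma base_facts (hs : s ∈ Omega n) (hj1 : j + 1 ∈ s) (hjs : j ∉ s) :
    0 ∉ s.erase (j + 1) ∧ j ∉ s.erase (j + 1) ∧ (j + 1) ∉ s.erase (j + 1) ∧
      (s.erase (j + 1)).sum id + (j + 1) = n := by
  obtain ⟨h0, hsum⟩ := mem_Omega.mp hs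
  refine ⟨fun h => h0 (Finset.mem_of_mem_erase h), fun h => hjs (Finset.mem_of_mem_erase h),
    Finset.notMem_erase _ _, ?_⟩
  have := Finset.sum_erase_add s id hj1
  simp only [id] at this hsum ⊢
  omega

/-- In the exceptional case, `1 ∉ B`. -/
lemma one_notmem_B (hj : 1 ≤ j) (hs : s ∈ Omega n) (hj1 : j + 1 ∈ s) (hjs : j ∉ s)
    (hc : 2 ^ pexp (s.erase (j + 1)) = j ∨ 2 ^ pexp (s.erase (j + 1)) = j + 1) :
    1 ∉ s.erase (j + 1) \ chainF (pexp (s.erase (j + 1))) := by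
  obtain ⟨h0, hAj, hAj1, hAsum⟩ := base_facts hs hj1 hjs
  intro h
  rw [Finset.mem_sdiff] at h
  rcases Nat.eq_zero_or_pos (pexp (s.erase (j + 1))) with ha | ha
  · rw [ha] at hc
    norm_num at hc
    have hj1' : (1:ℕ) = j := by omega
    exact hAj (hj1' ▸ h.1)
  · exact h.2 (mem_chainF.mpr ⟨0, ha, by norm_num⟩)

/-- In case 2b (with `n ≥ 9`), we get `8 ≤ 2^a` and the sum identity `n = 2^a + j`. -/
lemma case2b_facts (hn : 9 ≤ n) (hj : 1 ≤ j) (hs : s ∈ Omega n) (hj1 : j + 1 ∈ s) (hjs : j ∉ s)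
    (hc : 2 ^ pexp (s.erase (j + 1)) = j ∨ 2 ^ pexp (s.erase (j + 1)) = j + 1)
    (hB : ¬(s.erase (j + 1) \ chainF (pexp (s.erase (j + 1)))).Nonempty) :
    s.erase (j + 1) = chainF (pexp (s.erase (j + 1))) ∧
      8 ≤ 2 ^ pexp (s.erase (j + 1)) ∧ n = 2 ^ pexp (s.erase (j + 1)) + j := by
  obtain ⟨h0, hAj, hAj1, hAsum⟩ := base_facts hs hj1 hjs
  have hAch : s.erase (j + 1) = chainF (pexp (s.erase (j + 1))) := by
    refine Finset.Subset.antisymm ?_ chainF_subset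
    intro x hx
    by_contra hx2
    exact hB ⟨x, Finset.mem_sdiff.mpr ⟨hx, hx2⟩⟩
  have hchsum := sum_chainF (pexp (s.erase (j + 1)))
  rw [← hAch] at hchsum
  have h8 : 8 ≤ 2 ^ pexp (s.erase (j + 1)) := by
    apply two_pow_ge_eight
    omega
  exact ⟨hAch, h8, by omega⟩

/-- Non-identity images never contain `j+1`. -/
lemma j1_notmem_phi (hn : 9 ≤ n) (hj : 1 ≤ j) (hs : s ∈ Omega n) (hj1 : j + 1 ∈ s)
    (hjs : j ∉ s) : j + 1 ∉ phi j s := by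
  obtain ⟨h0, hAj, hAj1, hAsum⟩ := base_facts hs hj1 hjs
  have hBsub : (s.erase (j+1) \ chainF (pexp (s.erase (j+1)))) ⊆ s.erase (j+1) :=
    Finset.sdiff_subset
  by_cases hc : 2 ^ pexp (s.erase (j + 1)) = j ∨ 2 ^ pexp (s.erase (j + 1)) = j + 1
  · by_cases hB : (s.erase (j + 1) \ chainF (pexp (s.erase (j + 1)))).Nonempty
    · rw [phi_eq_case2a hjs hc hB]
      have h1B := one_notmem_B hj hs hj1 hjs hc
      set B := s.erase (j + 1) \ chainF (pexp (s.erase (j + 1))) with hBdef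
      set m := B.max' hB with hm
      have hmB : m ∈ B := B.max'_mem hB
      have hm1 : m ≠ 1 := fun h => h1B (h ▸ hmB)
      have hm0 : m ≠ 0 := fun h => h0 (hBsub (h ▸ hmB))
      simp only [Finset.mem_insert]
      push_neg
      refine ⟨by omega, ?_, fun h => hAj1 (hBsub (Finset.mem_of_mem_erase h))⟩
      rcases hc with h | h <;> omega
    · rw [phi_eq_case2b hjs hc hB]
      obtain ⟨hAch, h8, hns⟩ := case2b_facts hn hj hs hj1 hjs hc hB
      have hjle : j ≤ 2 ^ pexp (s.erase (j + 1)) := by rcases hc with h | h <;> omega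
      simp only [Finset.mem_insert, Finset.mem_singleton]
      push_neg
      refine ⟨by omega, by omega, by rcases hc with h | h <;> omega⟩
  · rw [phi_eq_case1 hjs hc]
    push_neg at hc
    simp only [Finset.mem_insert]
    push_neg
    exact ⟨by omega, fun h => hc.2 h.symm, fun h => hAj1 (hBsub h)⟩

end CaseLemmas


lemma two_pow_ne_three (c : ℕ) : 2 ^ c ≠ 3 := by
  cases c with
  | zero => norm_num
  | succ c =>
    have : 2 ^ (c + 1) = 2 * 2 ^ c := by ring
    omega

lemma two_pow_ne_pow_sub_three {c a : ℕ} (h8 : 8 ≤ 2 ^ a) : 2 ^ c ≠ 2 ^ a - 3 := by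
  have ha : a ≠ 0 := by rintro rfl; norm_num at h8
  obtain ⟨a', rfl⟩ := Nat.exists_eq_succ_of_ne_zero ha
  have h2a : 2 ^ (a' + 1) = 2 * 2 ^ a' := by ring
  cases c with
  | zero => simp; omega
  | succ c =>
    have : 2 ^ (c + 1) = 2 * 2 ^ c := by ring
    omega

lemma B_no_small_pow {A : Finset ℕ} {c : ℕ} (hc : c < pexp A) :
    2 ^ c ∉ A \ chainF (pexp A) :=
  fun h => (Finset.mem_sdiff.mp h).2 (mem_chainF.mpr ⟨c, hc, rfl⟩)

lemma B_no_pow_le {A : Finset ℕ} {c : ℕ} (hc : c ≤ pexp A) :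
    2 ^ c ∉ A \ chainF (pexp A) := by
  rcases Nat.lt_or_ge c (pexp A) with h | h
  · exact B_no_small_pow h
  · have : c = pexp A := by omega
    subst this
    exact fun h => (pexp_spec A) (Finset.mem_sdiff.mp h).1

lemma mem_phi_c1 {j : ℕ} {s : Finset ℕ} (hjs : j ∉ s)
    (hc : ¬(2 ^ pexp (s.erase (j + 1)) = j ∨ 2 ^ pexp (s.erase (j + 1)) = j + 1)) :
    2 ^ pexp (s.erase (j + 1)) ∈ phi j s := by
  rw [phi_eq_case1 hjs hc]
  simp

lemma small_pow_notmem_phi_c1 {n j : ℕ} {s : Finset ℕ} (hs : s ∈ Omega n) (hj1 : j + 1 ∈ s)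
    (hjs : j ∉ s)
    (hc : ¬(2 ^ pexp (s.erase (j + 1)) = j ∨ 2 ^ pexp (s.erase (j + 1)) = j + 1))
    {c : ℕ} (hlt : c < pexp (s.erase (j + 1))) : 2 ^ c ∉ phi j s := by
  obtain ⟨h0, hAj, hAj1, hAsum⟩ := base_facts hs hj1 hjs
  rw [phi_eq_case1 hjs hc]
  simp only [Finset.mem_insert]
  push_neg
  refine ⟨?_, ?_, B_no_small_pow hlt⟩
  · intro h
    have hmem := pexp_min hlt
    rw [h] at hmem
    exact hAj hmem
  · intro h
    have := Nat.pow_right_injective (le_refl 2) h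
    omega

lemma sig_exc {n j : ℕ} {s : Finset ℕ} (hn : 9 ≤ n) (hj : 1 ≤ j) (hs : s ∈ Omega n)
    (hj1 : j + 1 ∈ s) (hjs : j ∉ s)
    (hc : 2 ^ pexp (s.erase (j + 1)) = j ∨ 2 ^ pexp (s.erase (j + 1)) = j + 1)
    {c : ℕ} (hca : c ≤ pexp (s.erase (j + 1))) (hmem : 2 ^ c ∈ phi j s) : 2 ^ c = j := by
  obtain ⟨h0, hAj, hAj1, hAsum⟩ := base_facts hs hj1 hjs
  have hple : (2:ℕ) ^ c ≤ 2 ^ pexp (s.erase (j + 1)) := Nat.pow_le_pow_right (by norm_num) hca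
  by_cases hB : (s.erase (j + 1) \ chainF (pexp (s.erase (j + 1)))).Nonempty
  · rw [phi_eq_case2a hjs hc hB] at hmem
    simp only [Finset.mem_insert] at hmem
    rcases hmem with h | h | h
    · exact h
    · exfalso
      have hmax := (s.erase (j + 1) \ chainF (pexp (s.erase (j + 1)))).max'_mem hB
      have hm0 : (s.erase (j + 1) \ chainF (pexp (s.erase (j + 1)))).max' hB ≠ 0 :=
        fun hz => h0 (Finset.sdiff_subset (hz ▸ hmax))
      omega
    · exact absurd (Finset.mem_of_mem_erase h) (B_no_pow_le hca)
  · rw [phi_eq_case2b hjs hc hB] at hmem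
    obtain ⟨hAch, h8, hns⟩ := case2b_facts hn hj hs hj1 hjs hc hB
    simp only [Finset.mem_insert, Finset.mem_singleton] at hmem
    rcases hmem with h | h | h
    · exact h
    · exact absurd h (two_pow_ne_three c)
    · exact absurd h (two_pow_ne_pow_sub_three h8)

lemma insert_cancel {x : ℕ} {C D : Finset ℕ} (hC : x ∉ C) (hD : x ∉ D)
    (h : insert x C = insert x D) : C = D := by
  have := congrArg (fun t => Finset.erase t x) h
  simpa [Finset.erase_insert hC, Finset.erase_insert hD] using this

lemma A_recombine {A : Finset ℕ} : (A \ chainF (pexp A)) ∪ chainF (pexp A) = A :=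
  Finset.sdiff_union_of_subset chainF_subset

lemma phi_inj {n j : ℕ} (hn : 9 ≤ n) (hj : 1 ≤ j) {s₁ s₂ : Finset ℕ}
    (hs₁ : s₁ ∈ Omega n) (hm₁ : j + 1 ∈ s₁) (hs₂ : s₂ ∈ Omega n) (hm₂ : j + 1 ∈ s₂)
    (heq : phi j s₁ = phi j s₂) : s₁ = s₂ := by
  have hid : ∀ s : Finset ℕ, j ∈ s → phi j s = s := fun s h => by rw [phi, if_pos h]
  by_cases hjs₁ : j ∈ s₁ <;> by_cases hjs₂ : j ∈ s₂
  · rw [hid s₁ hjs₁, hid s₂ hjs₂] at heq; exact heq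
  · exfalso
    rw [hid s₁ hjs₁] at heq
    exact j1_notmem_phi hn hj hs₂ hm₂ hjs₂ (heq ▸ hm₁)
  · exfalso
    rw [hid s₂ hjs₂] at heq
    exact j1_notmem_phi hn hj hs₁ hm₁ hjs₁ (heq.symm ▸ hm₂)
  -- main case: both non-identity
  obtain ⟨h01, hAj₁, hAj1₁, hAsum₁⟩ := base_facts hs₁ hm₁ hjs₁
  obtain ⟨h02, hAj₂, hAj1₂, hAsum₂⟩ := base_facts hs₂ hm₂ hjs₂
  have hrec₁ : s₁ = insert (j + 1) (s₁.erase (j + 1)) := (Finset.insert_erase hm₁).symm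
  have hrec₂ : s₂ = insert (j + 1) (s₂.erase (j + 1)) := (Finset.insert_erase hm₂).symm
  have hexc_lt : ∀ {sa sb : Finset ℕ}, j ∉ sa.erase (j+1) → (j+1) ∉ sa.erase (j+1) →
      ¬(2 ^ pexp (sa.erase (j+1)) = j ∨ 2 ^ pexp (sa.erase (j+1)) = j + 1) →
      (2 ^ pexp (sb.erase (j+1)) = j ∨ 2 ^ pexp (sb.erase (j+1)) = j + 1) →
      pexp (sa.erase (j+1)) < pexp (sb.erase (j+1)) := by
    intro sa sb haj haj1 hca hcb
    rcases Nat.lt_or_ge (pexp (sa.erase (j+1))) (pexp (sb.erase (j+1))) with h | h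
    · exact h
    rcases Nat.eq_or_lt_of_le h with h' | h'
    · exfalso
      rw [h'] at hcb
      exact hca hcb
    · exfalso
      have hmem : 2 ^ pexp (sb.erase (j+1)) ∈ sa.erase (j+1) := pexp_min h'
      rcases hcb with h'' | h'' <;> rw [h''] at hmem
      · exact haj hmem
      · exact haj1 hmem
  by_cases hc₁ : 2 ^ pexp (s₁.erase (j + 1)) = j ∨ 2 ^ pexp (s₁.erase (j + 1)) = j + 1 <;>
    by_cases hc₂ : 2 ^ pexp (s₂.erase (j + 1)) = j ∨ 2 ^ pexp (s₂.erase (j + 1)) = j + 1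
  · -- both exceptional: first, the exponents agree
    have haeq : pexp (s₁.erase (j + 1)) = pexp (s₂.erase (j + 1)) := by
      by_contra hne
      rcases Nat.lt_or_ge (pexp (s₁.erase (j + 1))) (pexp (s₂.erase (j + 1))) with hlt | hge
      · have hplt : 2 ^ pexp (s₁.erase (j + 1)) < 2 ^ pexp (s₂.erase (j + 1)) :=
          Nat.pow_lt_pow_right (by norm_num) hlt
        have he1 : 2 ^ pexp (s₁.erase (j + 1)) = j := by
          rcases hc₁ with h|h <;> rcases hc₂ with h'|h' <;> omega
        have he2 : 2 ^ pexp (s₂.erase (j + 1)) = j + 1 := by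
          rcases hc₁ with h|h <;> rcases hc₂ with h'|h' <;> omega
        rcases Nat.eq_zero_or_pos (pexp (s₁.erase (j + 1))) with hz | hpos
        · rw [hz] at he1
          norm_num at he1
          have h1mem : 2 ^ 0 ∈ s₂.erase (j + 1) := pexp_min (by omega)
          have hj2 : (2:ℕ) ^ 0 = j := by simp; omega
          rw [hj2] at h1mem
          exact hAj₂ h1mem
        · obtain ⟨b, hb⟩ := Nat.exists_eq_succ_of_ne_zero (Nat.pos_iff_ne_zero.mp hpos)
          have hpos2 : 0 < pexp (s₂.erase (j + 1)) := by omega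
          obtain ⟨b', hb'⟩ := Nat.exists_eq_succ_of_ne_zero (Nat.pos_iff_ne_zero.mp hpos2)
          rw [hb] at he1
          rw [hb'] at he2
          have e1 : 2 ^ (b + 1) = 2 * 2 ^ b := by ring
          have e2 : 2 ^ (b' + 1) = 2 * 2 ^ b' := by ring
          omega
      · have hlt : pexp (s₂.erase (j + 1)) < pexp (s₁.erase (j + 1)) := by omega
        have hplt : 2 ^ pexp (s₂.erase (j + 1)) < 2 ^ pexp (s₁.erase (j + 1)) :=
          Nat.pow_lt_pow_right (by norm_num) hlt
        have he1 : 2 ^ pexp (s₂.erase (j + 1)) = j := by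
          rcases hc₁ with h|h <;> rcases hc₂ with h'|h' <;> omega
        have he2 : 2 ^ pexp (s₁.erase (j + 1)) = j + 1 := by
          rcases hc₁ with h|h <;> rcases hc₂ with h'|h' <;> omega
        rcases Nat.eq_zero_or_pos (pexp (s₂.erase (j + 1))) with hz | hpos
        · rw [hz] at he1
          norm_num at he1
          have h1mem : 2 ^ 0 ∈ s₁.erase (j + 1) := pexp_min (by omega)
          have hj2 : (2:ℕ) ^ 0 = j := by simp; omega
          rw [hj2] at h1mem
          exact hAj₁ h1mem
        · obtain ⟨b, hb⟩ := Nat.exists_eq_succ_of_ne_zero (Nat.pos_iff_ne_zero.mp hpos)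
          have hpos2 : 0 < pexp (s₁.erase (j + 1)) := by omega
          obtain ⟨b', hb'⟩ := Nat.exists_eq_succ_of_ne_zero (Nat.pos_iff_ne_zero.mp hpos2)
          rw [hb] at he1
          rw [hb'] at he2
          have e1 : 2 ^ (b + 1) = 2 * 2 ^ b := by ring
          have e2 : 2 ^ (b' + 1) = 2 * 2 ^ b' := by ring
          omega
    have hpoweq : (2:ℕ) ^ pexp (s₁.erase (j + 1)) = 2 ^ pexp (s₂.erase (j + 1)) := by
      rw [haeq]
    have hjle : j ≤ 2 ^ pexp (s₁.erase (j + 1)) := by rcases hc₁ with h | h <;> omega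
    by_cases hB₁ : (s₁.erase (j + 1) \ chainF (pexp (s₁.erase (j + 1)))).Nonempty <;>
      by_cases hB₂ : (s₂.erase (j + 1) \ chainF (pexp (s₂.erase (j + 1)))).Nonempty
    · -- case 2a / 2a
      rw [phi_eq_case2a hjs₁ hc₁ hB₁, phi_eq_case2a hjs₂ hc₂ hB₂] at heq
      set B₁ := s₁.erase (j + 1) \ chainF (pexp (s₁.erase (j + 1))) with hB₁def
      set B₂ := s₂.erase (j + 1) \ chainF (pexp (s₂.erase (j + 1))) with hB₂def
      set m₁ := B₁.max' hB₁ with hm₁def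
      set m₂ := B₂.max' hB₂ with hm₂def
      have hmax₁ : m₁ ∈ B₁ := B₁.max'_mem hB₁
      have hmax₂ : m₂ ∈ B₂ := B₂.max'_mem hB₂
      have h0m₁ : m₁ ≠ 0 := by
        intro hz
        rw [hz] at hmax₁
        exact h01 (Finset.sdiff_subset hmax₁)
      have h0m₂ : m₂ ≠ 0 := by
        intro hz
        rw [hz] at hmax₂
        exact h02 (Finset.sdiff_subset hmax₂)
      have hjB₁ : j ∉ B₁ := fun h => hAj₁ (Finset.sdiff_subset h)
      have hjB₂ : j ∉ B₂ := fun h => hAj₂ (Finset.sdiff_subset h)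
      have hmm : m₁ + 2 ^ pexp (s₁.erase (j + 1)) = m₂ + 2 ^ pexp (s₂.erase (j + 1)) := by
        by_contra hne
        have hin₁ : m₁ + 2 ^ pexp (s₁.erase (j + 1)) ∈
            insert j (insert (m₂ + 2 ^ pexp (s₂.erase (j + 1))) (B₂.erase m₂)) := by
          rw [← heq]
          exact Finset.mem_insert_of_mem (Finset.mem_insert_self _ _)
        have hin₂ : m₂ + 2 ^ pexp (s₂.erase (j + 1)) ∈
            insert j (insert (m₁ + 2 ^ pexp (s₁.erase (j + 1))) (B₁.erase m₁)) := by
          rw [heq]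
          exact Finset.mem_insert_of_mem (Finset.mem_insert_self _ _)
        simp only [Finset.mem_insert] at hin₁ hin₂
        have hle₁ : m₁ + 2 ^ pexp (s₁.erase (j + 1)) ≤ m₂ := by
          rcases hin₁ with h | h | h
          · omega
          · exact absurd h hne
          · exact B₂.le_max' _ (Finset.mem_of_mem_erase h)
        have hle₂ : m₂ + 2 ^ pexp (s₂.erase (j + 1)) ≤ m₁ := by
          rcases hin₂ with h | h | h
          · omega
          · exact absurd h (fun h' => hne h'.symm)
          · exact B₁.le_max' _ (Finset.mem_of_mem_erase h)
        omega
      have hmeq : m₁ = m₂ := by omega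
      have hjni₁ : j ∉ insert (m₁ + 2 ^ pexp (s₁.erase (j + 1))) (B₁.erase m₁) := by
        simp only [Finset.mem_insert]
        push_neg
        exact ⟨by omega, fun h => hjB₁ (Finset.mem_of_mem_erase h)⟩
      have hjni₂ : j ∉ insert (m₂ + 2 ^ pexp (s₂.erase (j + 1))) (B₂.erase m₂) := by
        simp only [Finset.mem_insert]
        push_neg
        exact ⟨by omega, fun h => hjB₂ (Finset.mem_of_mem_erase h)⟩
      have heq2 := insert_cancel hjni₁ hjni₂ heq
      rw [← hmm] at heq2
      have hX₁ : m₁ + 2 ^ pexp (s₁.erase (j + 1)) ∉ B₁.erase m₁ := by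
        intro h
        have := B₁.le_max' _ (Finset.mem_of_mem_erase h)
        have hp : (1:ℕ) ≤ 2 ^ pexp (s₁.erase (j + 1)) := Nat.one_le_two_pow
        omega
      have hX₂ : m₁ + 2 ^ pexp (s₁.erase (j + 1)) ∉ B₂.erase m₂ := by
        intro h
        have := B₂.le_max' _ (Finset.mem_of_mem_erase h)
        have hp : (1:ℕ) ≤ 2 ^ pexp (s₁.erase (j + 1)) := Nat.one_le_two_pow
        omega
      have heq3 := insert_cancel hX₁ hX₂ heq2
      have hBeq : B₁ = B₂ := by
        calc B₁ = insert m₁ (B₁.erase m₁) := (Finset.insert_erase hmax₁).symm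
          _ = insert m₁ (B₂.erase m₂) := by rw [heq3]
          _ = insert m₂ (B₂.erase m₂) := by rw [hmeq]
          _ = B₂ := Finset.insert_erase hmax₂
      have hAeq : s₁.erase (j + 1) = s₂.erase (j + 1) := by
        have u₁ : B₁ ∪ chainF (pexp (s₁.erase (j + 1))) = s₁.erase (j + 1) := A_recombine
        have u₂ : B₂ ∪ chainF (pexp (s₂.erase (j + 1))) = s₂.erase (j + 1) := A_recombine
        rw [← u₁, ← u₂, hBeq, haeq]
      rw [hrec₁, hrec₂, hAeq]
    · -- case 2a / 2b : impossible
      exfalso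
      obtain ⟨hAch₂, h8₂, hns₂⟩ := case2b_facts hn hj hs₂ hm₂ hjs₂ hc₂ hB₂
      rw [phi_eq_case2a hjs₁ hc₁ hB₁, phi_eq_case2b hjs₂ hc₂ hB₂] at heq
      set B₁ := s₁.erase (j + 1) \ chainF (pexp (s₁.erase (j + 1))) with hB₁def
      set m₁ := B₁.max' hB₁ with hm₁def
      have hmax₁ : m₁ ∈ B₁ := B₁.max'_mem hB₁
      have h0m₁ : m₁ ≠ 0 := by
        intro hz
        rw [hz] at hmax₁
        exact h01 (Finset.sdiff_subset hmax₁)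
      have hin : m₁ + 2 ^ pexp (s₁.erase (j + 1)) ∈
          ({j, 3, 2 ^ pexp (s₂.erase (j + 1)) - 3} : Finset ℕ) := by
        rw [← heq]
        exact Finset.mem_insert_of_mem (Finset.mem_insert_self _ _)
      simp only [Finset.mem_insert, Finset.mem_singleton] at hin
      omega
    · -- case 2b / 2a : impossible
      exfalso
      obtain ⟨hAch₁, h8₁, hns₁⟩ := case2b_facts hn hj hs₁ hm₁ hjs₁ hc₁ hB₁
      rw [phi_eq_case2b hjs₁ hc₁ hB₁, phi_eq_case2a hjs₂ hc₂ hB₂] at heq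
      set B₂ := s₂.erase (j + 1) \ chainF (pexp (s₂.erase (j + 1))) with hB₂def
      set m₂ := B₂.max' hB₂ with hm₂def
      have hmax₂ : m₂ ∈ B₂ := B₂.max'_mem hB₂
      have h0m₂ : m₂ ≠ 0 := by
        intro hz
        rw [hz] at hmax₂
        exact h02 (Finset.sdiff_subset hmax₂)
      have hin : m₂ + 2 ^ pexp (s₂.erase (j + 1)) ∈
          ({j, 3, 2 ^ pexp (s₁.erase (j + 1)) - 3} : Finset ℕ) := by
        rw [heq]
        exact Finset.mem_insert_of_mem (Finset.mem_insert_self _ _)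
      simp only [Finset.mem_insert, Finset.mem_singleton] at hin
      omega
    · -- case 2b / 2b
      obtain ⟨hAch₁, h8₁, hns₁⟩ := case2b_facts hn hj hs₁ hm₁ hjs₁ hc₁ hB₁
      obtain ⟨hAch₂, h8₂, hns₂⟩ := case2b_facts hn hj hs₂ hm₂ hjs₂ hc₂ hB₂
      have hAeq : s₁.erase (j + 1) = s₂.erase (j + 1) := by
        rw [hAch₁, hAch₂, haeq]
      rw [hrec₁, hrec₂, hAeq]
  · -- s₁ exceptional, s₂ plain : impossible
    exfalso
    have hlt := hexc_lt hAj₂ hAj1₂ hc₂ hc₁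
    have hmem : 2 ^ pexp (s₂.erase (j + 1)) ∈ phi j s₁ := by
      rw [heq]
      exact mem_phi_c1 hjs₂ hc₂
    have := sig_exc hn hj hs₁ hm₁ hjs₁ hc₁ (le_of_lt hlt) hmem
    push_neg at hc₂
    exact hc₂.1 this
  · -- s₁ plain, s₂ exceptional : impossible
    exfalso
    have hlt := hexc_lt hAj₁ hAj1₁ hc₁ hc₂
    have hmem : 2 ^ pexp (s₁.erase (j + 1)) ∈ phi j s₂ := by
      rw [← heq]
      exact mem_phi_c1 hjs₁ hc₁
    have := sig_exc hn hj hs₂ hm₂ hjs₂ hc₂ (le_of_lt hlt) hmem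
    push_neg at hc₁
    exact hc₁.1 this
  · -- both plain (case 1)
    have haeq : pexp (s₁.erase (j + 1)) = pexp (s₂.erase (j + 1)) := by
      by_contra hne
      rcases Nat.lt_or_ge (pexp (s₁.erase (j + 1))) (pexp (s₂.erase (j + 1))) with hlt | hge
      · have hmem : 2 ^ pexp (s₁.erase (j + 1)) ∈ phi j s₂ := by
          rw [← heq]
          exact mem_phi_c1 hjs₁ hc₁
        exact small_pow_notmem_phi_c1 hs₂ hm₂ hjs₂ hc₂ hlt hmem
      · have hlt : pexp (s₂.erase (j + 1)) < pexp (s₁.erase (j + 1)) := by omega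
        have hmem : 2 ^ pexp (s₂.erase (j + 1)) ∈ phi j s₁ := by
          rw [heq]
          exact mem_phi_c1 hjs₂ hc₂
        exact small_pow_notmem_phi_c1 hs₁ hm₁ hjs₁ hc₁ hlt hmem
    rw [phi_eq_case1 hjs₁ hc₁, phi_eq_case1 hjs₂ hc₂] at heq
    push_neg at hc₁ hc₂
    set B₁ := s₁.erase (j + 1) \ chainF (pexp (s₁.erase (j + 1))) with hB₁def
    set B₂ := s₂.erase (j + 1) \ chainF (pexp (s₂.erase (j + 1))) with hB₂def
    have hjni₁ : j ∉ insert (2 ^ pexp (s₁.erase (j + 1))) B₁ := by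
      simp only [Finset.mem_insert]
      push_neg
      exact ⟨fun h => hc₁.1 h.symm, fun h => hAj₁ (Finset.sdiff_subset h)⟩
    have hjni₂ : j ∉ insert (2 ^ pexp (s₂.erase (j + 1))) B₂ := by
      simp only [Finset.mem_insert]
      push_neg
      exact ⟨fun h => hc₂.1 h.symm, fun h => hAj₂ (Finset.sdiff_subset h)⟩
    have heq2 := insert_cancel hjni₁ hjni₂ heq
    rw [← haeq] at heq2
    have hp₁ : 2 ^ pexp (s₁.erase (j + 1)) ∉ B₁ := B_no_pow_le (le_refl _)
    have hp₂ : 2 ^ pexp (s₁.erase (j + 1)) ∉ B₂ := by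
      rw [haeq]
      exact B_no_pow_le (le_refl _)
    have heq3 := insert_cancel hp₁ hp₂ heq2
    have hAeq : s₁.erase (j + 1) = s₂.erase (j + 1) := by
      have u₁ : B₁ ∪ chainF (pexp (s₁.erase (j + 1))) = s₁.erase (j + 1) := A_recombine
      have u₂ : B₂ ∪ chainF (pexp (s₂.erase (j + 1))) = s₂.erase (j + 1) := A_recombine
      rw [← u₁, ← u₂, heq3, haeq]
    rw [hrec₁, hrec₂, hAeq]

lemma cF_succ_le {n j : ℕ} (hn : 9 ≤ n) (hj : 1 ≤ j) : cF (j + 1) n ≤ cF j n := by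
  unfold cF
  apply Finset.card_le_card_of_injOn (phi j)
  · intro s hs
    rw [Finset.mem_coe, Finset.mem_filter] at hs ⊢
    obtain ⟨h1, h2⟩ := phi_mem hn hj hs.1 hs.2
    exact ⟨h1, h2⟩
  · intro s₁ h₁ s₂ h₂ heq
    rw [Finset.mem_coe, Finset.mem_filter] at h₁ h₂
    exact phi_inj hn hj h₁.1 h₁.2 h₂.1 h₂.2 heq

lemma cF_anti {n i i' : ℕ} (hn : 9 ≤ n) (hi : 1 ≤ i) (hii : i ≤ i') : cF i' n ≤ cF i n := by
  induction i' with
  | zero => omega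
  | succ k ih =>
    rcases Nat.eq_or_lt_of_le hii with h | h
    · rw [h]
    · have hk : i ≤ k := by omega
      exact le_trans (cF_succ_le hn (by omega)) (ih hk)

/-- bridge: partition-world count equals finset-world count -/
lemma card_partition_filter (j n : ℕ) :
    ((Nat.Partition.distincts n).filter fun p => j ∈ p.parts).card = cF j n := by
  unfold cF
  apply Finset.card_bij (fun p _ => p.parts.toFinset)
  · intro p hp
    rw [Finset.mem_filter] at hp
    have hnd : p.parts.Nodup := by
      have := hp.1
      simp only [Nat.Partition.distincts, Finset.mem_filter] at this
      exact this.2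
    have hded : p.parts.dedup = p.parts := Multiset.dedup_eq_self.mpr hnd
    rw [Finset.mem_filter]
    constructor
    · apply mem_Omega.mpr
      constructor
      · intro h0
        rw [Multiset.mem_toFinset] at h0
        exact absurd (p.parts_pos h0) (by omega)
      · have : p.parts.toFinset.sum id = p.parts.toFinset.val.sum := by
          rw [Finset.sum]
          rw [Multiset.map_id]
        rw [this]
        show (p.parts.dedup).sum = n
        rw [hded]
        exact p.parts_sum
    · rw [Multiset.mem_toFinset]
      exact hp.2
  · intro p₁ hp₁ p₂ hp₂ heq
    rw [Finset.mem_filter] at hp₁ hp₂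
    have hnd₁ : p₁.parts.Nodup := by
      have := hp₁.1
      simp only [Nat.Partition.distincts, Finset.mem_filter] at this
      exact this.2
    have hnd₂ : p₂.parts.Nodup := by
      have := hp₂.1
      simp only [Nat.Partition.distincts, Finset.mem_filter] at this
      exact this.2
    apply Nat.Partition.ext
    have e := congrArg Finset.val heq
    show p₁.parts = p₂.parts
    calc p₁.parts = p₁.parts.dedup := (Multiset.dedup_eq_self.mpr hnd₁).symm
      _ = p₁.parts.toFinset.val := rfl
      _ = p₂.parts.toFinset.val := e
      _ = p₂.parts.dedup := rfl
      _ = p₂.parts := Multiset.dedup_eq_self.mpr hnd₂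
  · intro t ht
    rw [Finset.mem_filter] at ht
    obtain ⟨hom, hjt⟩ := ht
    obtain ⟨h0, hsum⟩ := mem_Omega.mp hom
    have hpos : ∀ {i : ℕ}, i ∈ t.val → 0 < i := by
      intro i hi
      have : i ∈ t := hi
      rcases Nat.eq_zero_or_pos i with h | h
      · exact absurd (h ▸ this) h0
      · exact h
    have hsum' : t.val.sum = n := by
      rw [← hsum, Finset.sum]
      rw [Multiset.map_id]
    refine ⟨⟨t.val, hpos, hsum'⟩, ?_, ?_⟩
    · rw [Finset.mem_filter]
      constructor
      · simp only [Nat.Partition.distincts, Finset.mem_filter, Finset.mem_univ, true_and]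
        exact t.nodup
      · exact hjt
    · apply Finset.ext
      intro x
      rw [Multiset.mem_toFinset]
      rfl

lemma D_eq (r t n : ℕ) :
    D r t n = ∑ x ∈ (Finset.range (n + 1)).filter (fun x => x % t = r % t), cF x n := by
  unfold D
  have step1 : ∀ p ∈ Nat.Partition.distincts n,
      (Multiset.filter (fun x => x % t = r % t) p.parts).card
        = ∑ x ∈ Finset.range (n + 1),
            if x % t = r % t ∧ x ∈ p.parts then 1 else 0 := by
    intro p hp
    have hnd : p.parts.Nodup := by
      simp only [Nat.Partition.distincts, Finset.mem_filter] at hp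
      exact hp.2
    have hded : p.parts.dedup = p.parts := Multiset.dedup_eq_self.mpr hnd
    have hsub : p.parts.toFinset ⊆ Finset.range (n + 1) := by
      intro x hx
      rw [Multiset.mem_toFinset] at hx
      have hle : x ≤ p.parts.sum := Multiset.le_sum_of_mem hx
      rw [p.parts_sum] at hle
      exact Finset.mem_range.mpr (by omega)
    have h1 : (Multiset.filter (fun x => x % t = r % t) p.parts).card
        = (p.parts.toFinset.filter (fun x => x % t = r % t)).card := by
      have h2 : (p.parts.toFinset.filter (fun x => x % t = r % t)).val
          = Multiset.filter (fun x => x % t = r % t) p.parts := by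
        rw [Finset.filter_val]
        show Multiset.filter _ p.parts.dedup = _
        rw [hded]
      rw [Finset.card_def, h2]
    rw [h1, Finset.card_filter]
    have h2 : (∑ x ∈ p.parts.toFinset, if x % t = r % t then 1 else 0)
        = ∑ x ∈ p.parts.toFinset, if x % t = r % t ∧ x ∈ p.parts then 1 else 0 := by
      apply Finset.sum_congr rfl
      intro x hx
      rw [Multiset.mem_toFinset] at hx
      simp [hx]
    rw [h2]
    apply Finset.sum_subset hsub
    intro x _ hnx
    rw [Multiset.mem_toFinset] at hnx
    simp [hnx]
  rw [Finset.sum_congr rfl step1, Finset.sum_comm]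
  have step2 : ∀ x ∈ Finset.range (n + 1),
      (∑ p ∈ Nat.Partition.distincts n, if x % t = r % t ∧ x ∈ p.parts then 1 else 0)
        = if x % t = r % t then cF x n else 0 := by
    intro x _
    by_cases hq : x % t = r % t
    · simp only [hq, true_and, if_true]
      rw [← card_partition_filter x n, Finset.card_filter]
    · simp [hq]
  rw [Finset.sum_congr rfl step2, ← Finset.sum_filter]

end Stmt2Aux

theorem stmt2 (t : ℕ) (ht2 : 2 ≤ t) (ht10 : t ≤ 10) (r s : ℕ)
    (hr : 1 ≤ r) (hrs : r < s) (hst : s ≤ t) (n : ℕ) (hn : 8 < n) :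
    D s t n ≤ D r t n := by
  have hn9 : 9 ≤ n := hn
  rw [Stmt2Aux.D_eq s t n, Stmt2Aux.D_eq r t n]
  have key : ∀ x ∈ (Finset.range (n + 1)).filter (fun x => x % t = s % t),
      x ≠ 0 → s ≤ x := by
    intro x hx hx0
    rw [Finset.mem_filter, Finset.mem_range] at hx
    by_contra hlt
    push_neg at hlt
    have hxt : x < t := by omega
    rw [Nat.mod_eq_of_lt hxt] at hx
    rcases Nat.lt_or_ge s t with h | h
    · rw [Nat.mod_eq_of_lt h] at hx
      omega
    · have hst' : s = t := by omega
      rw [hst', Nat.mod_self] at hx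
      omega
  calc ∑ x ∈ (Finset.range (n + 1)).filter (fun x => x % t = s % t), Stmt2Aux.cF x n
      ≤ ∑ x ∈ (Finset.range (n + 1)).filter (fun x => x % t = s % t),
          (if x = 0 then 0 else Stmt2Aux.cF (x - (s - r)) n) := by
        apply Finset.sum_le_sum
        intro x hx
        by_cases hx0 : x = 0
        · rw [if_pos hx0, hx0, Stmt2Aux.cF_zero]
        · rw [if_neg hx0]
          have hsx := key x hx hx0
          exact Stmt2Aux.cF_anti hn9 (by omega) (by omega)
    _ = ∑ x ∈ ((Finset.range (n + 1)).filter (fun x => x % t = s % t)).filter (fun x => ¬(x = 0)),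
          Stmt2Aux.cF (x - (s - r)) n := by
        conv_rhs => rw [Finset.sum_filter]
        apply Finset.sum_congr rfl
        intro x _
        rw [ite_not]
    _ = ∑ y ∈ (((Finset.range (n + 1)).filter (fun x => x % t = s % t)).filter
          (fun x => ¬(x = 0))).image (fun x => x - (s - r)), Stmt2Aux.cF y n := by
        rw [Finset.sum_image]
        intro x hx y hy hxy
        rw [Finset.mem_coe, Finset.mem_filter] at hx hy
        have h1 := key x hx.1 hx.2
        have h2 := key y hy.1 hy.2
        simp only [] at hxy
        omega
    _ ≤ ∑ x ∈ (Finset.range (n + 1)).filter (fun x => x % t = r % t), Stmt2Aux.cF x n := by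
        apply Finset.sum_le_sum_of_subset
        intro y hy
        rw [Finset.mem_image] at hy
        obtain ⟨x, hx, rfl⟩ := hy
        rw [Finset.mem_filter] at hx
        have hsx := key x hx.1 hx.2
        obtain ⟨hxr, hxm⟩ := Finset.mem_filter.mp hx.1
        rw [Finset.mem_range] at hxr
        rw [Finset.mem_filter, Finset.mem_range]
        constructor
        · omega
        · -- (x - (s - r)) % t = r % t
          have hmeq : Nat.ModEq t s x := (show x % t = s % t from hxm).symm
          have hdvd : t ∣ x - s := (Nat.modEq_iff_dvd' hsx).mp hmeq
          obtain ⟨k, hk⟩ := hdvd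
          have hxe : x - (s - r) = t * k + r := by omega
          rw [hxe, Nat.mul_add_mod]
end

section
/- Let 0 < r ≤ t be integers. Then for every complex number q with |q| < 1, Σ_{n≥0} D_{r,t}(n) qⁿ = ξ(q) · L_{r,t}(q); that is, the generating function of D_{r,t}(n) equals ∏_{n≥1}(1 + qⁿ) · Σ_{k≥0} q^{kt+r}/(1 + q^{kt+r}). -/
set_option maxHeartbeats 1000000

/-- `ξ(q) = ∏_{n ≥ 1} (1 + qⁿ)`. -/
noncomputable def xi (q : ℂ) : ℂ := ∏' n : ℕ, (1 + q ^ (n + 1))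

/-- `L_{r,t}(q) = Σ_{k ≥ 0} q^{kt+r}/(1 + q^{kt+r})`. -/
noncomputable def L (r t : ℕ) (q : ℂ) : ℂ :=
  ∑' k : ℕ, q ^ (k * t + r) / (1 + q ^ (k * t + r))

open Finset

/-- weight of a finset of (shifted) parts -/
def gS (S : Finset ℕ) : ℕ := ∑ i ∈ S, (i + 1)

/-- term of the expanded product -/
noncomputable def fS (q : ℂ) (S : Finset ℕ) : ℂ := q ^ gS S

/-- number of marked parts -/
def cS (r t : ℕ) (S : Finset ℕ) : ℕ := (S.filter fun i => (i + 1) % t = r % t).card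

lemma prod_one_add {R : Type*} [CommSemiring R] (w : ℕ → R) (u : Finset ℕ) :
    ∏ i ∈ u, (1 + w i) = ∑ S ∈ u.powerset, ∏ i ∈ S, w i := by
  classical
  have := Finset.prod_add w (fun _ => (1 : R)) u
  simpa [add_comm] using this

lemma summable_xpow {x : ℝ} (h0 : 0 ≤ x) (h1 : x < 1) :
    Summable (fun S : Finset ℕ => x ^ gS S) := by
  have hg : Summable (fun i : ℕ => x ^ (i + 1)) := by
    simpa [pow_succ] using (summable_geometric_of_lt_one h0 h1).mul_right x
  refine summable_of_sum_le (c := Real.exp (∑' i : ℕ, x ^ (i + 1)))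
    (fun S => by positivity) ?_
  intro u
  obtain ⟨N, hN⟩ := (u.sup id).exists_nat_subset_range
  have hu : u ⊆ (Finset.range N).powerset := fun S hS =>
    Finset.mem_powerset.2 ((Finset.le_sup (f := id) hS).trans hN)
  calc ∑ S ∈ u, x ^ gS S
      ≤ ∑ S ∈ (Finset.range N).powerset, x ^ gS S :=
        Finset.sum_le_sum_of_subset_of_nonneg hu (fun S _ _ => by positivity)
    _ = ∏ i ∈ Finset.range N, (1 + x ^ (i + 1)) := by
        rw [_root_.prod_one_add]
        exact (Finset.sum_congr rfl fun S _ =>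
          (Finset.prod_pow_eq_pow_sum S (fun i => i + 1) x)).symm
    _ ≤ ∏ i ∈ Finset.range N, Real.exp (x ^ (i + 1)) := by
        refine Finset.prod_le_prod (fun i _ => by positivity) (fun i _ => ?_)
        have := Real.add_one_le_exp (x ^ (i + 1))
        linarith
    _ = Real.exp (∑ i ∈ Finset.range N, x ^ (i + 1)) := (Real.exp_sum _ _).symm
    _ ≤ Real.exp (∑' i : ℕ, x ^ (i + 1)) := by
        refine Real.exp_le_exp.2 (Summable.sum_le_tsum _ (fun i _ => by positivity) hg)

variable {q : ℂ}

lemma summable_fS (hq : ‖q‖ < 1) : Summable (fS q) := by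
  refine Summable.of_norm ?_
  have := summable_xpow (norm_nonneg q) hq
  convert this using 2 with S
  simp [fS, norm_pow]

lemma hasSum_fS (hq : ‖q‖ < 1) : HasSum (fS q) (xi q) := by
  have hs := (summable_fS hq).hasSum
  have hxi : xi q = ∑' S : Finset ℕ, fS q S := by
    have h2 : Filter.Tendsto (fun u : Finset ℕ => u.powerset) Filter.atTop Filter.atTop :=
      Filter.tendsto_atTop_finset_of_monotone (fun a b h => Finset.powerset_mono.2 h)
        (fun S => ⟨S, Finset.mem_powerset_self S⟩)
    have hp : HasProd (fun n : ℕ => 1 + q ^ (n + 1)) (∑' S : Finset ℕ, fS q S) := by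
      have hcomp := hs.comp h2
      refine hcomp.congr (fun u => ?_)
      show ∑ S ∈ u.powerset, fS q S = ∏ i ∈ u, (1 + q ^ (i + 1))
      rw [_root_.prod_one_add]
      exact Finset.sum_congr rfl fun S _ =>
        (Finset.prod_pow_eq_pow_sum S (fun i => i + 1) q).symm
    exact hp.tprod_eq
  rw [hxi]; exact hs

/-- sum over finsets avoiding `b` -/
noncomputable def Tb (q : ℂ) (b : ℕ) : ℂ := ∑' S : {S : Finset ℕ // b ∉ S}, fS q S.1

lemma one_add_ne_zero (hq : ‖q‖ < 1) (b : ℕ) : (1 : ℂ) + q ^ (b + 1) ≠ 0 := by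
  intro h
  have h1 : q ^ (b + 1) = -1 := by linear_combination h
  have h2 : ‖q ^ (b + 1)‖ = 1 := by rw [h1]; simp
  rw [norm_pow] at h2
  have : ‖q‖ ^ (b + 1) < 1 :=
    pow_lt_one₀ (norm_nonneg q) hq (Nat.succ_ne_zero b)
  rw [h2] at this
  exact lt_irrefl _ this

lemma one_add_mul_Tb (hq : ‖q‖ < 1) (b : ℕ) :
    (1 + q ^ (b + 1)) * Tb q b = xi q := by
  classical
  have hsum := summable_fS hq
  let e : {S : Finset ℕ // b ∉ S} ≃ {S : Finset ℕ // b ∈ S} :=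
    { toFun := fun S => ⟨insert b S.1, Finset.mem_insert_self b S.1⟩
      invFun := fun S => ⟨S.1.erase b, Finset.notMem_erase b S.1⟩
      left_inv := fun S => Subtype.ext (Finset.erase_insert S.2)
      right_inv := fun S => Subtype.ext (Finset.insert_erase S.2) }
  have hmem : (∑' S : {S : Finset ℕ // b ∈ S}, fS q S.1) = q ^ (b + 1) * Tb q b := by
    rw [← Equiv.tsum_eq e (fun S : {S : Finset ℕ // b ∈ S} => fS q S.1)]
    have : ∀ S : {S : Finset ℕ // b ∉ S}, fS q (e S).1 = q ^ (b + 1) * fS q S.1 := by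
      intro S
      show fS q (insert b S.1) = q ^ (b + 1) * fS q S.1
      rw [fS, fS, gS, gS, Finset.sum_insert S.2, pow_add]
    rw [tsum_congr this, tsum_mul_left]
    rfl
  have hsplit := Summable.tsum_add_tsum_compl (s := {S : Finset ℕ | b ∈ S})
    (hsum.subtype _) (hsum.subtype _)
  have hxi : xi q = ∑' S : Finset ℕ, fS q S := (hasSum_fS hq).tsum_eq.symm
  have hc : (∑' S : ↥({S : Finset ℕ | b ∈ S}ᶜ), fS q S.1) = Tb q b := rfl
  have hm : (∑' S : ↥({S : Finset ℕ | b ∈ S}), fS q S.1) = q ^ (b + 1) * Tb q b := hmem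
  rw [hxi, ← hsplit, hm, hc]
  ring


lemma Tb_eq (hq : ‖q‖ < 1) (b : ℕ) :
    Tb q b = xi q / (1 + q ^ (b + 1)) := by
  rw [eq_div_iff (one_add_ne_zero hq b), mul_comm, one_add_mul_Tb hq b]

/-- shifted index of the k-th part in the arithmetic progression -/
def bb (r t k : ℕ) : ℕ := k * t + (r - 1)

lemma bb_succ {r t : ℕ} (hr : 0 < r) (k : ℕ) : bb r t k + 1 = k * t + r := by
  unfold bb; omega

lemma bb_mod {r t : ℕ} (hr : 0 < r) (k : ℕ) : (bb r t k + 1) % t = r % t := by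
  rw [bb_succ hr]; exact Nat.mul_add_mod' k t r

/-- recover the index from a shifted part -/
def kOf (r t i : ℕ) : ℕ := (i + 1 - r) / t

lemma bb_kOf {r t : ℕ} (hr : 0 < r) (hrt : r ≤ t) {i : ℕ}
    (hi : (i + 1) % t = r % t) : bb r t (kOf r t i) = i := by
  have ht : 0 < t := lt_of_lt_of_le hr hrt
  have hge : r ≤ i + 1 := by
    rcases eq_or_lt_of_le hrt with rfl | hlt
    · have h0 : (i + 1) % r = 0 := by rwa [Nat.mod_self] at hi
      exact Nat.le_of_dvd (Nat.succ_pos i) (Nat.dvd_of_mod_eq_zero h0)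
    · rw [Nat.mod_eq_of_lt hlt] at hi
      exact hi ▸ Nat.mod_le (i + 1) t
  have hdvd : t ∣ (i + 1 - r) := by
    have hmodeq : (i + 1) ≡ r [MOD t] := hi
    have := (Nat.modEq_iff_dvd' hge).1 hmodeq.symm
    exact this
  have hk : kOf r t i * t = i + 1 - r := by
    unfold kOf; exact Nat.div_mul_cancel hdvd
  unfold bb; omega

lemma kOf_bb {r t : ℕ} (hr : 0 < r) (hrt : r ≤ t) (k : ℕ) : kOf r t (bb r t k) = k := by
  have ht : 0 < t := lt_of_lt_of_le hr hrt
  have h1 : bb r t k + 1 - r = k * t := by unfold bb; omega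
  unfold kOf; rw [h1]; exact Nat.mul_div_cancel k ht

section main
variable (r t : ℕ)

/-- the summand over marked pairs -/
noncomputable def W (q : ℂ) (p : Σ k : ℕ, {S : Finset ℕ // bb r t k ∉ S}) : ℂ :=
  q ^ (bb r t p.1 + 1) * fS q p.2.1

lemma summable_W (hr : 0 < r) (hrt : r ≤ t) (hq : ‖q‖ < 1) :
    Summable (W r t q) := by
  have ht : 0 < t := lt_of_lt_of_le hr hrt
  have hx0 : (0 : ℝ) ≤ ‖q‖ := norm_nonneg q
  have hu : Summable (fun k : ℕ => (‖q‖) ^ (bb r t k + 1)) := by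
    refine Summable.of_nonneg_of_le (fun k => by positivity) (fun k => ?_)
      (summable_geometric_of_lt_one hx0 hq)
    refine pow_le_pow_of_le_one hx0 hq.le ?_
    have : k ≤ k * t := Nat.le_mul_of_pos_right k ht
    unfold bb; omega
  have hv := summable_xpow hx0 hq
  have hprod := hu.mul_of_nonneg hv (fun k => by positivity) (fun S => by positivity)
  have hinj : Function.Injective
      (fun p : Σ k : ℕ, {S : Finset ℕ // bb r t k ∉ S} => (p.1, p.2.1)) := by
    rintro ⟨k, S, hS⟩ ⟨k', S', hS'⟩ h
    simp only [Prod.mk.injEq] at h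
    exact Sigma.subtype_ext h.1 h.2
  refine Summable.of_norm ?_
  have := hprod.comp_injective hinj
  convert this using 2 with p
  show ‖q ^ (bb r t p.1 + 1) * fS q p.2.1‖ = _
  simp [fS, norm_mul, norm_pow]
  rfl

lemma hasSum_W (hr : 0 < r) (hrt : r ≤ t) (hq : ‖q‖ < 1) :
    HasSum (W r t q) (xi q * L r t q) := by
  have hsum := summable_fS hq
  have hWs := (summable_W r t hr hrt hq).hasSum
  have hfib : ∀ k : ℕ, HasSum (fun S : {S : Finset ℕ // bb r t k ∉ S} =>
      W r t q ⟨k, S⟩) (q ^ (bb r t k + 1) * Tb q (bb r t k)) := by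
    intro k
    have h1 : Summable (fun S : {S : Finset ℕ // bb r t k ∉ S} => fS q S.1) :=
      hsum.subtype {S : Finset ℕ | bb r t k ∉ S}
    exact h1.hasSum.mul_left _
  have hg : HasSum (fun k => q ^ (bb r t k + 1) * Tb q (bb r t k)) (∑' p, W r t q p) :=
    HasSum.sigma hWs hfib
  have hpt : ∀ k : ℕ, q ^ (bb r t k + 1) * Tb q (bb r t k)
      = xi q * (q ^ (k * t + r) / (1 + q ^ (k * t + r))) := by
    intro k
    rw [Tb_eq hq, bb_succ hr]
    field_simp
  have hL : (∑' p, W r t q p) = xi q * L r t q := by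
    rw [← hg.tsum_eq, tsum_congr hpt, tsum_mul_left, L]
  rw [← hL]
  exact hWs

/-- the marking equivalence -/
noncomputable def phi (hr : 0 < r) (hrt : r ≤ t) :
    (Σ k : ℕ, {S : Finset ℕ // bb r t k ∉ S}) ≃
    (Σ S : Finset ℕ, {i : ℕ // i ∈ S.filter (fun i => (i + 1) % t = r % t)}) where
  toFun p := ⟨insert (bb r t p.1) p.2.1, ⟨bb r t p.1,
    Finset.mem_filter.2 ⟨Finset.mem_insert_self _ _, bb_mod hr p.1⟩⟩⟩
  invFun p := ⟨kOf r t p.2.1, ⟨p.1.erase p.2.1, by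
    rw [bb_kOf hr hrt (Finset.mem_filter.1 p.2.2).2]
    exact Finset.notMem_erase _ _⟩⟩
  left_inv := by
    rintro ⟨k, S, hS⟩
    refine Sigma.subtype_ext (kOf_bb hr hrt k) ?_
    show (insert (bb r t k) S).erase (bb r t k) = S
    exact Finset.erase_insert hS
  right_inv := by
    rintro ⟨S, i, hi⟩
    have hi' := Finset.mem_filter.1 hi
    have hbb : bb r t (kOf r t i) = i := bb_kOf hr hrt hi'.2
    refine Sigma.subtype_ext ?_ ?_
    · show insert (bb r t (kOf r t i)) (S.erase i) = S
      rw [hbb]; exact Finset.insert_erase hi'.1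
    · exact hbb

lemma hasSum_marked (hr : 0 < r) (hrt : r ≤ t) (hq : ‖q‖ < 1) :
    HasSum (fun p : Σ S : Finset ℕ,
        {i : ℕ // i ∈ S.filter (fun i => (i + 1) % t = r % t)} => fS q p.1)
      (xi q * L r t q) := by
  have h1 : HasSum (W r t q ∘ (phi r t hr hrt).symm) (xi q * L r t q) :=
    (Equiv.hasSum_iff (phi r t hr hrt).symm).2 (hasSum_W r t hr hrt hq)
  have heq : (W r t q ∘ (phi r t hr hrt).symm) = fun p : Σ S : Finset ℕ,
      {i : ℕ // i ∈ S.filter (fun i => (i + 1) % t = r % t)} => fS q p.1 := by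
    funext p
    obtain ⟨S, i, hi⟩ := p
    have hi' := Finset.mem_filter.1 hi
    have hbb : bb r t (kOf r t i) = i := bb_kOf hr hrt hi'.2
    show q ^ (bb r t (kOf r t i) + 1) * fS q (S.erase i) = fS q S
    rw [hbb, fS, fS, ← pow_add, gS, gS]
    congr 1
    exact Finset.add_sum_erase S (fun i => i + 1) hi'.1
  rwa [heq] at h1

lemma hasSum_main (hr : 0 < r) (hrt : r ≤ t) (hq : ‖q‖ < 1) :
    HasSum (fun S : Finset ℕ => (cS r t S : ℂ) * fS q S) (xi q * L r t q) := by
  refine HasSum.sigma (hasSum_marked r t hr hrt hq) (fun S => ?_)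
  have h := hasSum_fintype (fun _ : {i : ℕ // i ∈ S.filter (fun i => (i + 1) % t = r % t)}
    => fS q S)
  have hval : ∑ _i : {i : ℕ // i ∈ S.filter (fun i => (i + 1) % t = r % t)}, fS q S
      = (cS r t S : ℂ) * fS q S := by
    rw [Finset.sum_const, Finset.card_univ, Fintype.card_coe, nsmul_eq_mul, cS]
  rwa [hval] at h

end main

lemma psig_ext {n m : ℕ} {p : {p : n.Partition // p ∈ Nat.Partition.distincts n}}
    {p' : {p : m.Partition // p ∈ Nat.Partition.distincts m}} (h : n = m)
    (h2 : p.1.parts = p'.1.parts) :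
    (⟨n, p⟩ : Σ n : ℕ, {p : n.Partition // p ∈ Nat.Partition.distincts n}) = ⟨m, p'⟩ := by
  subst h
  exact congrArg _ (Subtype.ext (Nat.Partition.ext h2))

lemma mem_distincts_iff {n : ℕ} (p : n.Partition) :
    p ∈ Nat.Partition.distincts n ↔ p.parts.Nodup := by
  simp [Nat.Partition.distincts]

lemma nodup_map_pred {M : Multiset ℕ} (hpos : ∀ i ∈ M, 0 < i) (hnd : M.Nodup) :
    (M.map (· - 1)).Nodup :=
  Multiset.Nodup.map_on
    (fun x hx y hy h => by have := hpos x hx; have := hpos y hy; omega) hnd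

lemma val_V {n : ℕ} (p : n.Partition) (hnd : p.parts.Nodup) :
    ((p.parts.map (· - 1)).toFinset).1 = p.parts.map (· - 1) := by
  rw [Multiset.toFinset_val, Multiset.dedup_eq_self.2
    (nodup_map_pred (fun i hi => p.parts_pos hi) hnd)]

lemma map_succ_V {n : ℕ} (p : n.Partition) (hnd : p.parts.Nodup) :
    (((p.parts.map (· - 1)).toFinset).1).map (· + 1) = p.parts := by
  rw [val_V p hnd, Multiset.map_map]
  have : ∀ x ∈ p.parts, ((· + 1) ∘ (· - 1)) x = id x := by
    intro x hx
    have := p.parts_pos hx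
    simp only [Function.comp_apply, id_eq]
    omega
  rw [Multiset.map_congr rfl this, Multiset.map_id]

lemma gS_V {n : ℕ} (p : n.Partition) (hnd : p.parts.Nodup) :
    gS ((p.parts.map (· - 1)).toFinset) = n := by
  have : gS ((p.parts.map (· - 1)).toFinset)
      = ((((p.parts.map (· - 1)).toFinset).1).map (· + 1)).sum := rfl
  rw [this, map_succ_V p hnd, p.parts_sum]

lemma cS_V {r t n : ℕ} (p : n.Partition) (hnd : p.parts.Nodup) :
    cS r t ((p.parts.map (· - 1)).toFinset)
      = (Multiset.filter (fun j => j % t = r % t) p.parts).card := by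
  classical
  unfold cS
  have hval : (((p.parts.map (· - 1)).toFinset).filter
      (fun i => (i + 1) % t = r % t)).val
      = (Multiset.filter (fun j => j % t = r % t) p.parts).map (· - 1) := by
    rw [Finset.filter_val, val_V p hnd, Multiset.filter_map]
    congr 1
    refine Multiset.filter_congr (fun j hj => ?_)
    have := p.parts_pos hj
    show (j - 1 + 1) % t = r % t ↔ j % t = r % t
    rw [Nat.sub_add_cancel this]
  rw [Finset.card_def, hval, Multiset.card_map]

/-- the partition/finset equivalence -/
def psi : (Σ n : ℕ, {p : n.Partition // p ∈ Nat.Partition.distincts n}) ≃ Finset ℕ where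
  toFun x := (x.2.1.parts.map (· - 1)).toFinset
  invFun S := ⟨gS S,
    ⟨⟨S.1.map (· + 1),
      fun {i} hi => by obtain ⟨j, _, rfl⟩ := Multiset.mem_map.1 hi; exact Nat.succ_pos j,
      rfl⟩,
    (mem_distincts_iff _).2 (S.nodup.map (add_left_injective 1))⟩⟩
  left_inv := by
    rintro ⟨n, p, hp⟩
    have hnd : p.parts.Nodup := (mem_distincts_iff p).1 hp
    have h1 : gS ((p.parts.map (· - 1)).toFinset) = n := gS_V p hnd
    have h2 : (((p.parts.map (· - 1)).toFinset).1).map (· + 1) = p.parts :=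
      map_succ_V p hnd
    exact psig_ext h1 (h2.trans rfl)
  right_inv := by
    intro S
    have : (Multiset.map (· + 1) S.1).map (· - 1) = S.1 := by
      rw [Multiset.map_map]
      have : ∀ x ∈ S.1, ((· - 1) ∘ (· + 1)) x = id x := by
        intro x hx; simp
      rw [Multiset.map_congr rfl this, Multiset.map_id]
    show ((Multiset.map (· + 1) S.1).map (· - 1)).toFinset = S
    rw [this, Finset.val_toFinset]

theorem stmt4 (r t : ℕ) (hr : 0 < r) (hrt : r ≤ t) (q : ℂ) (hq : ‖q‖ < 1) :
    ∑' n : ℕ, (D r t n : ℂ) * q ^ n = xi q * L r t q := by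
  classical
  have hMain := hasSum_main r t hr hrt hq
  have h1 : HasSum ((fun S : Finset ℕ => (cS r t S : ℂ) * fS q S) ∘ psi)
      (xi q * L r t q) := (Equiv.hasSum_iff psi).2 hMain
  refine (HasSum.sigma h1 (fun n => ?_)).tsum_eq
  have hpt : ∀ p : {p : n.Partition // p ∈ Nat.Partition.distincts n},
      ((fun S : Finset ℕ => (cS r t S : ℂ) * fS q S) ∘ psi) ⟨n, p⟩
      = ((Multiset.filter (fun j => j % t = r % t) p.1.parts).card : ℂ) * q ^ n := by
    intro p
    have hnd : p.1.parts.Nodup := (mem_distincts_iff p.1).1 p.2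
    show (cS r t ((p.1.parts.map (· - 1)).toFinset) : ℂ)
        * fS q ((p.1.parts.map (· - 1)).toFinset) = _
    rw [cS_V p.1 hnd, fS, gS_V p.1 hnd]
  have h2 := hasSum_fintype (fun p : {p : n.Partition // p ∈ Nat.Partition.distincts n} =>
    ((fun S : Finset ℕ => (cS r t S : ℂ) * fS q S) ∘ psi) ⟨n, p⟩)
  have hval : ∑ p : {p : n.Partition // p ∈ Nat.Partition.distincts n},
      ((fun S : Finset ℕ => (cS r t S : ℂ) * fS q S) ∘ psi) ⟨n, p⟩
      = (D r t n : ℂ) * q ^ n := by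
    rw [Finset.sum_congr rfl (fun p _ => hpt p)]
    rw [Finset.sum_coe_sort (Nat.Partition.distincts n)
      (fun p => ((Multiset.filter (fun j => j % t = r % t) p.parts).card : ℂ) * q ^ n)]
    rw [← Finset.sum_mul, D]
    push_cast
    rfl
  rwa [hval] at h2
end

section
/- For every complex number z with Re(z) > 0, Σ_{n≥1} Log(1 + e^{−nz}) = z · ( Σ_{m≥0} B((2m+1)z) − Σ_{m≥0} B((2m+2)z) ), where Log denotes the principal branch of the logarithm. (The left-hand side is a branch of log ξ(e^{−z}).) -/
/-- `B(w) = e^{-w}/(w(1 - e^{-w}))`. -/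
noncomputable def Bfun (w : ℂ) : ℂ :=
  Complex.exp (-w) / (w * (1 - Complex.exp (-w)))

theorem stmt5 (z : ℂ) (hz : 0 < z.re) :
    ∑' n : ℕ, Complex.log (1 + Complex.exp (-((n : ℂ) + 1) * z)) =
      z * ((∑' m : ℕ, Bfun ((2 * (m : ℂ) + 1) * z)) -
           ∑' m : ℕ, Bfun ((2 * (m : ℂ) + 2) * z)) := by
  have hz0 : z ≠ 0 := fun h => by simp [h] at hz
  set q : ℂ := Complex.exp (-z) with hqdef
  have hq : ‖q‖ < 1 := by
    rw [hqdef, Complex.norm_exp]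
    exact Real.exp_lt_one_iff.mpr (by simpa using hz)
  have hq0 : (0:ℝ) ≤ ‖q‖ := norm_nonneg _
  -- the double-sum terms
  set F : ℕ → ℕ → ℂ := fun k n => (-1) ^ k * q ^ ((k+1)*(n+1)) / (k+1) with hFdef
  -- exp(-(n+1)z) = q^(n+1)
  have hexp : ∀ m : ℕ, Complex.exp (-((m : ℂ) + 1) * z) = q ^ (m+1) := by
    intro m
    rw [hqdef, ← Complex.exp_nat_mul]
    congr 1
    push_cast
    ring
  have hqpow : ∀ m : ℕ, ‖q ^ (m+1)‖ < 1 := by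
    intro m
    rw [norm_pow]
    exact pow_lt_one₀ hq0 hq (Nat.succ_ne_zero m)
  -- Step A: Taylor series of log fiberwise in n
  have hA : ∀ n : ℕ,
      HasSum (fun k => F k n) (Complex.log (1 + Complex.exp (-((n : ℂ) + 1) * z))) := by
    intro n
    have h1 := Complex.hasSum_taylorSeries_log (z := q ^ (n+1)) (hqpow n)
    have h2 := (hasSum_nat_add_iff' (f := fun k : ℕ =>
      (-1) ^ (k + 1) * (q ^ (n+1)) ^ k / k) 1).mpr h1
    have hzero : (∑ i ∈ Finset.range 1, (-1:ℂ) ^ (i + 1) * (q ^ (n+1)) ^ i / i) = 0 := by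
      simp
    rw [hzero, sub_zero] at h2
    rw [hexp n]
    have hfun : (fun k : ℕ => F k n) =
        fun k : ℕ => (-1) ^ (k + 1 + 1) * (q ^ (n+1)) ^ (k + 1) / ((k:ℕ) + 1 : ℕ) := by
      funext k
      rw [hFdef]
      simp only [← pow_mul]
      rw [show (n+1)*(k+1) = (k+1)*(n+1) by ring]
      push_cast
      ring
    rw [hfun]
    exact h2
  -- Step B: summability of the double series
  have hB : Summable (fun p : ℕ × ℕ => F p.1 p.2) := by
    have hgeo : Summable (fun p : ℕ × ℕ => ‖q‖ ^ p.1 * ‖q‖ ^ p.2) :=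
      Summable.mul_of_nonneg (summable_geometric_of_lt_one hq0 hq)
        (summable_geometric_of_lt_one hq0 hq)
        (fun _ => pow_nonneg hq0 _) (fun _ => pow_nonneg hq0 _)
    refine Summable.of_norm_bounded hgeo ?_
    rintro ⟨k, n⟩
    have hk1 : (1:ℝ) ≤ ‖((k:ℂ)+1)‖ := by
      rw [show ((k:ℂ)+1) = ((k+1:ℕ):ℂ) by push_cast; ring, Complex.norm_natCast]
      exact_mod_cast Nat.succ_le_succ (Nat.zero_le k)
    have h1 : ‖F k n‖ ≤ ‖q‖ ^ ((k+1)*(n+1)) := by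
      rw [hFdef]
      simp only [norm_div, norm_mul, norm_pow, norm_neg, norm_one, one_pow, one_mul]
      exact div_le_self (pow_nonneg hq0 _) hk1
    calc ‖F k n‖ ≤ ‖q‖ ^ ((k+1)*(n+1)) := h1
      _ ≤ ‖q‖ ^ (k + n) := pow_le_pow_of_le_one hq0 hq.le (by nlinarith)
      _ = ‖q‖ ^ k * ‖q‖ ^ n := pow_add _ _ _
  -- 1 - q^(k+1) ≠ 0
  have hone : ∀ k : ℕ, 1 - q ^ (k+1) ≠ 0 := by
    intro k h
    have h1 : q ^ (k+1) = 1 := by linear_combination -h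
    have h2 := hqpow k
    rw [h1] at h2
    simp at h2
  -- Step D: geometric sum fiberwise in k
  have hD : ∀ k : ℕ,
      HasSum (fun n => F k n) ((-1) ^ k * (z * Bfun (((k:ℂ)+1) * z))) := by
    intro k
    have hk0 : ((k:ℂ)+1) ≠ 0 := by exact_mod_cast Nat.succ_ne_zero k
    have hek : Complex.exp (-(((k:ℂ)+1) * z)) = q ^ (k+1) := by
      rw [hqdef, ← Complex.exp_nat_mul]
      congr 1
      push_cast
      ring
    have hgeo := hasSum_geometric_of_norm_lt_one (hqpow k)
    have h2 := (hgeo.mul_left (q ^ (k+1))).mul_left ((-1)^k / ((k:ℂ)+1))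
    have hval : (-1:ℂ)^k / ((k:ℂ)+1) * (q^(k+1) * (1 - q^(k+1))⁻¹) =
        (-1) ^ k * (z * Bfun (((k:ℂ)+1) * z)) := by
      simp only [Bfun, hek]
      have hw0 : 1 - q ^ (k+1) ≠ 0 := hone k
      set w := q ^ (k+1) with hw
      field_simp [hk0, hz0, hw0]
    rw [hval] at h2
    have hfun : (fun n : ℕ => F k n) =
        fun n : ℕ => (-1:ℂ)^k / ((k:ℂ)+1) * (q^(k+1) * (q^(k+1)) ^ n) := by
      funext n
      rw [hFdef]
      simp only [← pow_mul]
      ring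
    rw [hfun]
    exact h2
  -- total sum
  set T : ℂ := ∑' p : ℕ × ℕ, F p.1 p.2 with hT
  have hTot : HasSum (fun p : ℕ × ℕ => F p.1 p.2) T := hB.hasSum
  have hLHS : HasSum (fun n : ℕ => Complex.log (1 + Complex.exp (-((n : ℂ) + 1) * z))) T := by
    have hswap : HasSum (fun p : ℕ × ℕ => F p.2 p.1) T :=
      (Equiv.prodComm ℕ ℕ).hasSum_iff.mpr hTot
    exact hswap.prod_fiberwise hA
  set g : ℕ → ℂ := fun k => (-1) ^ k * (z * Bfun (((k:ℂ)+1) * z)) with hgdef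
  have hg : HasSum g T := hTot.prod_fiberwise hD
  have he : Summable fun m => g (2*m) :=
    hg.summable.comp_injective (fun a b h => by omega)
  have ho : Summable fun m => g (2*m+1) :=
    hg.summable.comp_injective (fun a b h => by omega)
  have hsplit := tsum_even_add_odd he ho
  rw [hg.tsum_eq] at hsplit
  have h1 : ∑' m : ℕ, g (2*m) = z * ∑' m : ℕ, Bfun ((2 * (m : ℂ) + 1) * z) := by
    rw [← tsum_mul_left]
    apply tsum_congr
    intro m
    have harg : ((2*m : ℕ) : ℂ) + 1 = 2*(m:ℂ)+1 := by push_cast; ring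
    simp only [hgdef]
    rw [harg, pow_mul, neg_one_sq, one_pow, one_mul]
  have h2 : ∑' m : ℕ, g (2*m+1) = -(z * ∑' m : ℕ, Bfun ((2 * (m : ℂ) + 2) * z)) := by
    rw [← tsum_mul_left, ← tsum_neg]
    apply tsum_congr
    intro m
    have harg : ((2*m+1 : ℕ) : ℂ) + 1 = 2*(m:ℂ)+2 := by push_cast; ring
    simp only [hgdef]
    rw [harg, pow_succ, pow_mul, neg_one_sq, one_pow, one_mul]
    ring
  rw [hLHS.tsum_eq, ← hsplit, h1, h2]
  ring
end

section
/- Let n ≥ 1 be an integer, ν ≤ −1 a real number, and set η := π/√(12n). Define F(w) := w^{−ν−1} · exp( π²/(12w) + (n + 1/24) w ) for w ∈ ℂ off the negative real axis, using the principal branch of w^{−ν−1}. Then (1/(2π)) · ( | ∫_0^∞ F( (η − u) + 10ηi ) du | + | ∫_0^∞ F( (η − u) − 10ηi ) du | ) < 2 · exp( (3π/4) √(n/3) ) · ∫_0^∞ (10 + u)^{−ν−1} e^{−(n + 1/24) u} du. (Equivalently, the modified Bessel function I_ν(π√((n + 1/24)/3)), expressed as a Hankel-type contour integral over the contour D = D_−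 ∪ D_0 ∪ D_+ with D_± = {u ± 10ηi : u ≤ η} and D_0 = {η + iv : |v| ≤ 10η}, differs from the integral over D_0 alone by at most 2(2π²/(24n+1))^{ν/2} exp((3π/4)√(n/3)) ∫_0^∞ (10+u)^{−ν−1} e^{−(n+1/24)u} du.) -/
open Real MeasureTheory
lemma absF (p c a b : ℝ) (hb : b ≠ 0) :
    norm (((a : ℂ) + (b : ℂ) * Complex.I) ^ ((p : ℝ) : ℂ) *
      Complex.exp ((π : ℂ) ^ 2 / (12 * ((a : ℂ) + (b : ℂ) * Complex.I)) +
        ((c : ℝ) : ℂ) * ((a : ℂ) + (b : ℂ) * Complex.I)))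
    = Real.sqrt (a ^ 2 + b ^ 2) ^ p *
      Real.exp (π ^ 2 / 12 * (a / (a ^ 2 + b ^ 2)) + c * a) := by
  set w : ℂ := (a : ℂ) + (b : ℂ) * Complex.I with hw
  have hw0 : w ≠ 0 := by
    intro h
    apply hb
    have := congrArg Complex.im h
    simpa [hw] using this
  have hre : w.re = a := by simp [hw]
  have him : w.im = b := by simp [hw]
  have hns : Complex.normSq w = a ^ 2 + b ^ 2 := by
    rw [hw]; exact Complex.normSq_add_mul_I a b
  rw [norm_mul, Complex.norm_cpow_of_ne_zero hw0, Complex.norm_exp]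
  have h1 : ‖w‖ = Real.sqrt (a ^ 2 + b ^ 2) := by
    rw [hw]; exact Complex.norm_add_mul_I a b
  have h2 : ((π : ℂ) ^ 2 / (12 * w) + ((c : ℝ) : ℂ) * w).re
      = π ^ 2 / 12 * (a / (a ^ 2 + b ^ 2)) + c * a := by
    have : (π : ℂ) ^ 2 / (12 * w) = ((π ^ 2 / 12 : ℝ) : ℂ) * w⁻¹ := by
      push_cast
      field_simp
    rw [Complex.add_re, this]
    simp only [Complex.mul_re, Complex.ofReal_re, Complex.ofReal_im,
      Complex.inv_re, Complex.inv_im, hns, hre, him]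
    ring
  rw [h1, h2]
  simp

lemma g_integrable (p c : ℝ) (hp : 0 ≤ p) (hc : 0 < c) :
    IntegrableOn (fun u : ℝ => (10 + u) ^ p * Real.exp (-c * u)) (Set.Ici 0) := by
  have hcont : ContinuousOn (fun u : ℝ => (10 + u) ^ p * Real.exp (-c * u)) (Set.Ici 0) := by
    apply ContinuousOn.mul
    · apply ContinuousOn.rpow_const (by fun_prop)
      intro x hx
      left
      simp only [Set.mem_Ici] at hx
      positivity
    · fun_prop
  have h1 : IntegrableOn (fun u : ℝ => (10 + u) ^ p * Real.exp (-c * u)) (Set.Icc 0 10) :=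
    (hcont.mono Set.Icc_subset_Ici_self).integrableOn_compact isCompact_Icc
  have h2 : IntegrableOn (fun u : ℝ => (10 + u) ^ p * Real.exp (-c * u)) (Set.Ioi 10) := by
    have hG : IntegrableOn (fun x : ℝ => x ^ p * Real.exp (-c * x)) (Set.Ioi 0) := by
      have := integrableOn_rpow_mul_exp_neg_mul_rpow (p := 1) (s := p) (b := c)
        (by linarith) zero_lt_one hc
      simpa using this
    have hG' : IntegrableOn (fun x : ℝ => 11 ^ p * (x ^ p * Real.exp (-c * x))) (Set.Ioi 10) :=
      ((hG.mono_set (Set.Ioi_subset_Ioi (by norm_num))).const_mul _)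
    apply Integrable.mono' hG'
      ((hcont.mono (fun x hx => le_of_lt (by simpa using lt_trans (by norm_num : (0:ℝ) < 10) hx))).aestronglyMeasurable
        measurableSet_Ioi)
    · filter_upwards [MeasureTheory.ae_restrict_mem measurableSet_Ioi] with x hx
      simp only [Set.mem_Ioi] at hx
      have hx0 : (0:ℝ) < x := by linarith
      rw [Real.norm_eq_abs, abs_of_nonneg (by positivity)]
      have : (10 + x) ^ p ≤ 11 ^ p * x ^ p := by
        rw [← Real.mul_rpow (by norm_num) hx0.le]
        exact Real.rpow_le_rpow (by linarith) (by linarith) hp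
      have he : (0:ℝ) < Real.exp (-c * x) := Real.exp_pos _
      nlinarith [Real.exp_pos (-c*x), Real.rpow_nonneg (le_of_lt (show (0:ℝ) < 10 + x by linarith)) p]
  have : Set.Ici (0:ℝ) = Set.Icc 0 10 ∪ Set.Ioi 10 := (Set.Icc_union_Ioi_eq_Ici (by norm_num)).symm
  rw [this]
  exact h1.union h2

lemma g_pos (p c : ℝ) (hp : 0 ≤ p) (hc : 0 < c) :
    0 < ∫ u in Set.Ici (0:ℝ), (10 + u) ^ p * Real.exp (-c * u) := by
  have hnn : 0 ≤ᶠ[ae (volume.restrict (Set.Ici (0:ℝ)))]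
      fun u : ℝ => (10 + u) ^ p * Real.exp (-c * u) := by
    filter_upwards [MeasureTheory.ae_restrict_mem measurableSet_Ici] with x hx
    simp only [Set.mem_Ici] at hx
    positivity
  rw [MeasureTheory.setIntegral_pos_iff_support_of_nonneg_ae hnn (g_integrable p c hp hc)]
  have hsub : Set.Ici (0:ℝ) ⊆ Function.support (fun u : ℝ => (10 + u) ^ p * Real.exp (-c * u))
        ∩ Set.Ici 0 := by
    intro x hx
    refine ⟨?_, hx⟩
    simp only [Set.mem_Ici] at hx
    simp only [Function.mem_support]
    positivity
  calc (0:ENNReal) < volume (Set.Ici (0:ℝ)) := by simp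
    _ ≤ _ := measure_mono hsub

set_option maxHeartbeats 1000000 in
theorem stmt10 (n : ℕ) (hn : 1 ≤ n) (ν : ℝ) (hν : ν ≤ -1) :
    (1 / (2 * π)) *
        (norm (∫ u in Set.Ici (0 : ℝ),
            ((((π / Real.sqrt (12 * n) - u : ℝ) : ℂ) +
                10 * ((π / Real.sqrt (12 * n) : ℝ) : ℂ) * Complex.I) ^ ((-ν - 1 : ℝ) : ℂ) *
              Complex.exp ((π : ℂ) ^ 2 /
                  (12 * ((((π / Real.sqrt (12 * n) - u : ℝ)) : ℂ) +
                    10 * ((π / Real.sqrt (12 * n) : ℝ) : ℂ) * Complex.I)) +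
                ((n : ℂ) + 1 / 24) * ((((π / Real.sqrt (12 * n) - u : ℝ)) : ℂ) +
                  10 * ((π / Real.sqrt (12 * n) : ℝ) : ℂ) * Complex.I))))
          + norm (∫ u in Set.Ici (0 : ℝ),
            ((((π / Real.sqrt (12 * n) - u : ℝ) : ℂ) -
                10 * ((π / Real.sqrt (12 * n) : ℝ) : ℂ) * Complex.I) ^ ((-ν - 1 : ℝ) : ℂ) *
              Complex.exp ((π : ℂ) ^ 2 /
                  (12 * ((((π / Real.sqrt (12 * n) - u : ℝ)) : ℂ) -
                    10 * ((π / Real.sqrt (12 * n) : ℝ) : ℂ) * Complex.I)) +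
                ((n : ℂ) + 1 / 24) * ((((π / Real.sqrt (12 * n) - u : ℝ)) : ℂ) -
                  10 * ((π / Real.sqrt (12 * n) : ℝ) : ℂ) * Complex.I))))) <
      2 * Real.exp ((3 * π / 4) * Real.sqrt ((n : ℝ) / 3)) *
        ∫ u in Set.Ici (0 : ℝ), (10 + u) ^ (-ν - 1) * Real.exp (-((n : ℝ) + 1 / 24) * u) := by
  have hn' : (1:ℝ) ≤ n := by exact_mod_cast hn
  set s : ℝ := Real.sqrt (12 * n) with hs_def
  have hs0 : 0 < s := Real.sqrt_pos.mpr (by positivity)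
  have hs2 : s ^ 2 = 12 * n := Real.sq_sqrt (by positivity)
  set η : ℝ := π / s with hη_def
  have hπ := Real.pi_pos
  have hη : 0 < η := by positivity
  set p : ℝ := -ν - 1 with hp_def
  have hp : 0 ≤ p := by simp only [hp_def]; linarith
  set c : ℝ := (n : ℝ) + 1 / 24 with hc_def
  have hc : 0 < c := by simp only [hc_def]; linarith
  set C : ℝ := (3 * π / 4) * Real.sqrt ((n : ℝ) / 3) with hC_def
  set J : ℝ := ∫ u in Set.Ici (0:ℝ), (10 + u) ^ p * Real.exp (-c * u) with hJ_def
  have h11 : 11 * η ≤ 10 := by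
    rw [hη_def, show 11 * (π / s) = 11 * π / s by ring, div_le_iff₀ hs0]
    apply le_of_lt (lt_of_pow_lt_pow_left₀ 2 (by positivity) ?_)
    nlinarith [Real.pi_lt_d6, hπ, hs2, hn']
  have hsq : Real.sqrt ((n:ℝ)/3) = s / 6 := by
    rw [show (n:ℝ)/3 = (s/6)^2 by nlinarith]
    exact Real.sqrt_sq (by positivity)
  have hCb : π ^ 2 / 12 * (1 / (100 * η)) + c * η ≤ C := by
    have e1 : π ^ 2 / 12 * (1 / (100 * η)) = π * s / 1200 := by
      rw [hη_def]; field_simp; ring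
    have e2 : C = π * s / 8 := by rw [hC_def, hsq]; ring
    rw [e1, e2, hη_def]
    have : c * (π / s) ≤ π * s / 8 - π * s / 1200 := by
      rw [show c * (π/s) = c * π / s by ring, div_le_iff₀ hs0]
      nlinarith [hπ]
    linarith
  -- pointwise bound
  have key : ∀ b : ℝ, b ^ 2 = 100 * η ^ 2 → ∀ u : ℝ, 0 ≤ u →
      Real.sqrt ((η - u) ^ 2 + b ^ 2) ^ p *
        Real.exp (π ^ 2 / 12 * ((η - u) / ((η - u) ^ 2 + b ^ 2)) + c * (η - u))
      ≤ Real.exp C * ((10 + u) ^ p * Real.exp (-c * u)) := by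
    intro b hb u hu
    have hden : 0 < (η - u) ^ 2 + b ^ 2 := by rw [hb]; positivity
    have h1 : Real.sqrt ((η - u) ^ 2 + b ^ 2) ≤ 10 + u := by
      rw [show (10 + u) = Real.sqrt ((10 + u) ^ 2) from (Real.sqrt_sq (by linarith)).symm]
      apply Real.sqrt_le_sqrt
      rw [hb]
      nlinarith [mul_nonneg hη.le hu, mul_le_mul h11 h11 (by positivity) (by norm_num)]
    have h2 : π ^ 2 / 12 * ((η - u) / ((η - u) ^ 2 + b ^ 2)) + c * (η - u) ≤ C + -c * u := by
      have hfrac : (η - u) / ((η - u) ^ 2 + b ^ 2) ≤ 1 / (100 * η) := by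
        rw [div_le_div_iff₀ hden (by positivity), hb]
        nlinarith [sq_nonneg (η - u), mul_nonneg hη.le hu]
      have := mul_le_mul_of_nonneg_left hfrac (by positivity : (0:ℝ) ≤ π ^ 2 / 12)
      nlinarith [hCb]
    calc Real.sqrt ((η - u) ^ 2 + b ^ 2) ^ p *
          Real.exp (π ^ 2 / 12 * ((η - u) / ((η - u) ^ 2 + b ^ 2)) + c * (η - u))
        ≤ (10 + u) ^ p * Real.exp (C + -c * u) :=
          mul_le_mul (Real.rpow_le_rpow (Real.sqrt_nonneg _) h1 hp)
            (Real.exp_le_exp.mpr h2) (Real.exp_pos _).le (Real.rpow_nonneg (by linarith) _)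
      _ = Real.exp C * ((10 + u) ^ p * Real.exp (-c * u)) := by
          rw [Real.exp_add]; ring
  have hgi := g_integrable p c hp hc
  have hJpos : 0 < J := g_pos p c hp hc
  -- bound for each of the two integrals
  have habs : ∀ b : ℝ, b ≠ 0 → b ^ 2 = 100 * η ^ 2 →
      norm (∫ u in Set.Ici (0:ℝ),
        ((((η - u : ℝ) : ℂ) + ((b : ℝ) : ℂ) * Complex.I) ^ ((p : ℝ) : ℂ) *
          Complex.exp ((π : ℂ) ^ 2 / (12 * (((η - u : ℝ) : ℂ) + ((b : ℝ) : ℂ) * Complex.I)) +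
            ((c : ℝ) : ℂ) * (((η - u : ℝ) : ℂ) + ((b : ℝ) : ℂ) * Complex.I))))
      ≤ Real.exp C * J := by
    intro b hb0 hb
    calc ‖∫ u in Set.Ici (0:ℝ),
          ((((η - u : ℝ) : ℂ) + ((b : ℝ) : ℂ) * Complex.I) ^ ((p : ℝ) : ℂ) *
            Complex.exp ((π : ℂ) ^ 2 / (12 * (((η - u : ℝ) : ℂ) + ((b : ℝ) : ℂ) * Complex.I)) +
              ((c : ℝ) : ℂ) * (((η - u : ℝ) : ℂ) + ((b : ℝ) : ℂ) * Complex.I)))‖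
        ≤ ∫ u in Set.Ici (0:ℝ),
          ‖((((η - u : ℝ) : ℂ) + ((b : ℝ) : ℂ) * Complex.I) ^ ((p : ℝ) : ℂ) *
            Complex.exp ((π : ℂ) ^ 2 / (12 * (((η - u : ℝ) : ℂ) + ((b : ℝ) : ℂ) * Complex.I)) +
              ((c : ℝ) : ℂ) * (((η - u : ℝ) : ℂ) + ((b : ℝ) : ℂ) * Complex.I)))‖ :=
          norm_integral_le_integral_norm _
      _ ≤ ∫ u in Set.Ici (0:ℝ), Real.exp C * ((10 + u) ^ p * Real.exp (-c * u)) := by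
          apply integral_mono_of_nonneg
            (Filter.Eventually.of_forall fun u => norm_nonneg _) (hgi.const_mul _)
          filter_upwards [MeasureTheory.ae_restrict_mem measurableSet_Ici] with u hu
          simp only [Set.mem_Ici] at hu
          rw [absF p c (η - u) b hb0]
          exact key b hb u hu
      _ = Real.exp C * J := by rw [MeasureTheory.integral_const_mul]
  have bplus := habs (10 * η) (by positivity) (by ring)
  have bminus := habs (-(10 * η)) (by simp; positivity) (by ring)
  have eplus : ∀ u : ℝ, (((η - u : ℝ) : ℂ) + 10 * ((η : ℝ) : ℂ) * Complex.I)
      = (((η - u : ℝ) : ℂ) + (((10 * η : ℝ)) : ℂ) * Complex.I) := by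
    intro u; push_cast; ring
  have eminus : ∀ u : ℝ, (((η - u : ℝ) : ℂ) - 10 * ((η : ℝ) : ℂ) * Complex.I)
      = (((η - u : ℝ) : ℂ) + (((-(10 * η) : ℝ)) : ℂ) * Complex.I) := by
    intro u; push_cast; ring
  have ec : ((n : ℂ) + 1 / 24) = ((c : ℝ) : ℂ) := by rw [hc_def]; push_cast; ring
  simp only [eplus, eminus, ec]
  have hEJ : 0 < Real.exp C * J := mul_pos (Real.exp_pos _) hJpos
  calc (1 / (2 * π)) * (norm _ + norm _)
      ≤ (1 / (2 * π)) * (Real.exp C * J + Real.exp C * J) := by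
        apply mul_le_mul_of_nonneg_left (add_le_add bplus bminus) (by positivity)
    _ < 2 * Real.exp C * J := by
        rw [div_mul_eq_mul_div, one_mul, div_lt_iff₀ (by positivity : (0:ℝ) < 2 * π)]
        nlinarith [Real.pi_gt_three]
end

section
/- Let t ≥ 2 be an integer and let z = η + iy be a complex number with 10η ≤ |y| < π and 0 < η < π/(40t). Then | ξ(e^{−z}) | < exp( 41/(50η) ). -/
open Complex Real

/-- `log |1+w| ≤ Re w + ‖w‖²/2`. -/
lemma log_abs_one_add_le {w : ℂ} (hw : ‖w‖ < 1) :
    Real.log (‖1 + w‖) ≤ w.re + ‖w‖ ^ 2 / 2 := by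
  have hpos : (0 : ℝ) < ‖1 + w‖ := by
    have h1 : ‖(1 : ℂ)‖ - ‖-w‖ ≤ ‖(1 : ℂ) - -w‖ := norm_sub_norm_le _ _
    simp only [norm_one, norm_neg, sub_neg_eq_add] at h1
    linarith
  have hsq : (‖1 + w‖) ^ 2 = 1 + (2 * w.re + ‖w‖ ^ 2) := by
    rw [Complex.sq_norm, Complex.normSq_add]
    simp [Complex.normSq_one, Complex.normSq_eq_norm_sq]
    ring
  have h2 : Real.log ((‖1 + w‖) ^ 2) ≤ 2 * w.re + ‖w‖ ^ 2 := by
    calc Real.log ((‖1 + w‖) ^ 2) ≤ (‖1 + w‖) ^ 2 - 1 :=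
          Real.log_le_sub_one_of_pos (by positivity)
      _ = 2 * w.re + ‖w‖ ^ 2 := by rw [hsq]; ring
  rw [Real.log_pow] at h2
  push_cast at h2
  linarith

theorem stmt15 (t : ℕ) (ht : 2 ≤ t)
    (z : ℂ) (hy1 : 10 * z.re ≤ |z.im|) (hy2 : |z.im| < Real.pi)
    (hη0 : 0 < z.re) (hη : z.re < Real.pi / (40 * t)) :
    ‖xi (Complex.exp (-z))‖ < Real.exp (41 / (50 * z.re)) := by
  set η := z.re with hηdef
  set y := z.im with hydef
  set q := Complex.exp (-z) with hqdef
  have hqnorm : ‖q‖ = Real.exp (-η) := by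
    rw [Complex.norm_exp]
    simp [hηdef]
  have hq1 : ‖q‖ < 1 := by
    rw [hqnorm]
    exact Real.exp_lt_one_iff.2 (by linarith)
  have hq0 : 0 ≤ ‖q‖ := norm_nonneg q
  -- norm of powers
  have hpow : ∀ n : ℕ, ‖q ^ (n + 1)‖ ≤ ‖q‖ := by
    intro n
    rw [norm_pow]
    calc ‖q‖ ^ (n + 1) ≤ ‖q‖ ^ 1 := pow_le_pow_of_le_one hq0 hq1.le (by omega)
      _ = ‖q‖ := pow_one _
  have hpow1 : ∀ n : ℕ, ‖q ^ (n + 1)‖ < 1 := fun n => lt_of_le_of_lt (hpow n) hq1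
  have hne : ∀ n : ℕ, 1 + q ^ (n + 1) ≠ 0 := by
    intro n h
    have : ‖q ^ (n + 1)‖ = 1 := by
      have : q ^ (n + 1) = -1 := by linear_combination h
      rw [this]; simp
    linarith [hpow1 n]
  -- summability of logs
  have hsum : Summable (fun n : ℕ => Complex.log (1 + q ^ (n + 1))) := by
    apply Summable.of_norm_bounded (g := fun n => ((1 - ‖q‖)⁻¹ / 2 + 1) * ‖q‖ ^ (n + 1))
    · apply Summable.mul_left
      exact ((summable_geometric_of_norm_lt_one (x := ‖q‖) (by simpa using hq1)).mul_left ‖q‖).congr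
        (fun n => by rw [← pow_succ'])
    · intro n
      calc ‖Complex.log (1 + q ^ (n + 1))‖
          ≤ ‖q ^ (n + 1)‖ ^ 2 * (1 - ‖q ^ (n + 1)‖)⁻¹ / 2 + ‖q ^ (n + 1)‖ :=
            Complex.norm_log_one_add_le (hpow1 n)
        _ ≤ ‖q ^ (n + 1)‖ * (1 - ‖q‖)⁻¹ / 2 + ‖q ^ (n + 1)‖ := by
            have e1 : ‖q ^ (n + 1)‖ ^ 2 ≤ ‖q ^ (n + 1)‖ := by
              nlinarith [norm_nonneg (q ^ (n + 1)), hpow1 n]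
            have e2 : (1 - ‖q ^ (n + 1)‖)⁻¹ ≤ (1 - ‖q‖)⁻¹ := by
              apply inv_anti₀ (by linarith)
              linarith [hpow n]
            have e3 : (0:ℝ) ≤ (1 - ‖q ^ (n + 1)‖)⁻¹ :=
              le_of_lt (inv_pos.2 (by linarith [hpow1 n]))
            nlinarith [norm_nonneg (q ^ (n + 1))]
        _ = ((1 - ‖q‖)⁻¹ / 2 + 1) * ‖q ^ (n + 1)‖ := by ring
        _ = ((1 - ‖q‖)⁻¹ / 2 + 1) * ‖q‖ ^ (n + 1) := by rw [norm_pow]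
  -- the product equals exp of the sum
  have hprod : xi q = Complex.exp (∑' n : ℕ, Complex.log (1 + q ^ (n + 1))) := by
    rw [xi]
    refine HasProd.tprod_eq ?_
    have h := hsum.hasSum.cexp
    rwa [show (Complex.exp ∘ fun n : ℕ => Complex.log (1 + q ^ (n + 1))) =
      (fun n : ℕ => 1 + q ^ (n + 1)) from funext fun n => Complex.exp_log (hne n)] at h
  -- abs of exp
  have habs : ‖xi q‖ =
      Real.exp (∑' n : ℕ, Real.log (‖1 + q ^ (n + 1)‖)) := by
    rw [hprod, Complex.norm_exp, Complex.re_tsum hsum]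
    congr 1
    exact tsum_congr fun n => Complex.log_re _
  -- summable real parts
  have hsumre : Summable (fun n : ℕ => Real.log (‖1 + q ^ (n + 1)‖)) := by
    have := (Complex.hasSum_re hsum.hasSum).summable
    exact this.congr fun n => (Complex.log_re _)
  -- geometric sums
  have hgeom : Summable (fun n : ℕ => q ^ (n + 1)) :=
    ((summable_geometric_of_norm_lt_one hq1).mul_left q).congr (fun n => by rw [← pow_succ'])
  have hq2 : ‖q‖ ^ 2 < 1 := by nlinarith
  have hgeom2 : Summable (fun n : ℕ => (‖q‖ ^ 2) ^ (n + 1) / 2) := by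
    apply Summable.div_const
    have hs2 : Summable (fun n : ℕ => (‖q‖ ^ 2) ^ n) :=
      summable_geometric_of_lt_one (by positivity) hq2
    exact (hs2.mul_left _).congr (fun n => by rw [← pow_succ'])
  have hsumRHS : Summable (fun n : ℕ => (q ^ (n + 1)).re + (‖q‖ ^ 2) ^ (n + 1) / 2) :=
    ((Complex.hasSum_re hgeom.hasSum).summable).add hgeom2
  -- term-wise bound
  have hterm : ∀ n : ℕ, Real.log (‖1 + q ^ (n + 1)‖) ≤
      (q ^ (n + 1)).re + (‖q‖ ^ 2) ^ (n + 1) / 2 := by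
    intro n
    have := log_abs_one_add_le (hpow1 n)
    have h2 : ‖q ^ (n + 1)‖ ^ 2 = (‖q‖ ^ 2) ^ (n + 1) := by
      rw [norm_pow]; ring
    linarith [this, h2 ▸ this]
  have hle : (∑' n : ℕ, Real.log (‖1 + q ^ (n + 1)‖)) ≤
      (∑' n : ℕ, (q ^ (n + 1)).re) + ∑' n : ℕ, (‖q‖ ^ 2) ^ (n + 1) / 2 := by
    rw [← Summable.tsum_add ((Complex.hasSum_re hgeom.hasSum).summable) hgeom2]
    exact Summable.tsum_le_tsum hterm hsumre hsumRHS
  -- basic facts about η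
  have hπ : (0:ℝ) < Real.pi := Real.pi_pos
  have hη80 : η < Real.pi / 80 := by
    have h80 : (80:ℝ) ≤ 40 * t := by
      have : (2:ℝ) ≤ (t:ℝ) := by exact_mod_cast ht
      nlinarith
    calc η < Real.pi / (40 * t) := hη
      _ ≤ Real.pi / 80 := by
        apply div_le_div_of_nonneg_left hπ.le (by norm_num) h80
  -- components of q
  have hqre : q.re = Real.exp (-η) * Real.cos y := by
    rw [hqdef, Complex.exp_re]
    simp [hηdef, hydef, Real.cos_neg]
  have hqim : q.im = -(Real.exp (-η) * Real.sin y) := by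
    rw [hqdef, Complex.exp_im]
    simp [hηdef, hydef, Real.sin_neg]
  -- bound on the first sum
  have hT1 : (∑' n : ℕ, (q ^ (n + 1)).re) ≤ Real.pi / (20 * η) := by
    have hsum1 : (∑' n : ℕ, q ^ (n + 1)) = q * (1 - q)⁻¹ := by
      rw [← geom_series_mul_shift q hq1, tsum_geometric_of_norm_lt_one hq1]
    have h1q : (0:ℝ) < ‖1 - q‖ := by
      rcases le_or_gt (‖1 - q‖) 0 with h | h
      · exfalso
        have : (1:ℂ) - q = 0 := by
          have := norm_nonneg (1 - q)
          have h0 : ‖1 - q‖ = 0 := le_antisymm h this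
          exact norm_eq_zero.1 h0
        have : q = 1 := by linear_combination -this
        rw [this] at hq1; simp at hq1
      · exact h
    have hb : ‖1 - q‖ ≥ Real.exp (-η) * (20 * η / Real.pi) := by
      rcases le_or_gt (|y|) (Real.pi / 2) with hcase | hcase
      · -- |y| ≤ π/2 : use the imaginary part and Jordan's inequality
        have him : |(1 - q).im| ≤ ‖1 - q‖ := Complex.abs_im_le_norm _
        have h2 : (1 - q).im = Real.exp (-η) * Real.sin y := by
          simp [Complex.sub_im, hqim]
        have hj : 2 / Real.pi * |y| ≤ |Real.sin y| := Real.mul_abs_le_abs_sin hcase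
        have h3 : |(1 - q).im| = Real.exp (-η) * |Real.sin y| := by
          rw [h2, abs_mul, abs_of_pos (Real.exp_pos _)]
        have h4 : 2 / Real.pi * (10 * η) ≤ |Real.sin y| := by
          calc 2 / Real.pi * (10 * η) ≤ 2 / Real.pi * |y| := by
                apply mul_le_mul_of_nonneg_left hy1 (by positivity)
            _ ≤ |Real.sin y| := hj
        calc Real.exp (-η) * (20 * η / Real.pi)
            = Real.exp (-η) * (2 / Real.pi * (10 * η)) := by ring
          _ ≤ Real.exp (-η) * |Real.sin y| := by
              apply mul_le_mul_of_nonneg_left h4 (Real.exp_pos _).le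
          _ = |(1 - q).im| := h3.symm
          _ ≤ ‖1 - q‖ := him
      · -- |y| > π/2 : real part of 1 - q is at least 1
        have hcos : Real.cos y ≤ 0 := by
          have : Real.cos |y| ≤ 0 :=
            Real.cos_nonpos_of_pi_div_two_le_of_le hcase.le (by linarith)
          rcases abs_choice y with h | h
          · rwa [h] at this
          · rw [h, Real.cos_neg] at this; exact this
        have hre : (1 - q).re ≥ 1 := by
          simp only [Complex.sub_re, Complex.one_re, hqre]
          nlinarith [Real.exp_pos (-η)]
        have : (1:ℝ) ≤ ‖1 - q‖ :=
          le_trans hre (le_trans (le_abs_self _) (Complex.abs_re_le_norm _))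
        calc Real.exp (-η) * (20 * η / Real.pi)
            ≤ 1 * (20 * η / Real.pi) := by
              apply mul_le_mul_of_nonneg_right (Real.exp_le_one_iff.2 (by linarith)) (by positivity)
          _ ≤ 1 := by
              rw [one_mul, div_le_one hπ]
              linarith
          _ ≤ ‖1 - q‖ := this
    calc (∑' n : ℕ, (q ^ (n + 1)).re) = (∑' n : ℕ, q ^ (n + 1)).re :=
          (Complex.re_tsum hgeom).symm
      _ ≤ ‖∑' n : ℕ, q ^ (n + 1)‖ := Complex.re_le_norm _
      _ = ‖q‖ * (‖1 - q‖)⁻¹ := by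
          rw [hsum1, norm_mul, norm_inv]
      _ ≤ Real.exp (-η) * (Real.exp (-η) * (20 * η / Real.pi))⁻¹ := by
          apply mul_le_mul
          · rw [hqnorm]
          · apply inv_anti₀ (by positivity) hb
          · positivity
          · positivity
      _ = Real.pi / (20 * η) := by
          rw [mul_inv, ← mul_assoc, mul_inv_cancel₀ (Real.exp_ne_zero _)]
          rw [one_mul, inv_div]
  -- bound on the second sum
  have hT2 : (∑' n : ℕ, (‖q‖ ^ 2) ^ (n + 1) / 2) ≤ 1 / (4 * η) := by
    have hr0 : (0:ℝ) ≤ ‖q‖ ^ 2 := by positivity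
    have hsum2 : (∑' n : ℕ, (‖q‖ ^ 2) ^ (n + 1)) = ‖q‖ ^ 2 * (1 - ‖q‖ ^ 2)⁻¹ := by
      rw [← geom_series_mul_shift (‖q‖ ^ 2) (by rwa [Real.norm_eq_abs, _root_.abs_of_nonneg hr0]),
        tsum_geometric_of_lt_one hr0 hq2]
    have hval : ‖q‖ ^ 2 = Real.exp (-(2 * η)) := by
      rw [hqnorm, ← Real.exp_nat_mul]
      norm_num
    have hkey : ‖q‖ ^ 2 * (1 - ‖q‖ ^ 2)⁻¹ ≤ 1 / (2 * η) := by
      rw [hval]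
      have he : Real.exp (-(2 * η)) * (1 + 2 * η) ≤ 1 := by
        have h1 : 1 + 2 * η ≤ Real.exp (2 * η) := by
          have := Real.add_one_le_exp (2 * η)
          linarith
        calc Real.exp (-(2 * η)) * (1 + 2 * η) ≤ Real.exp (-(2 * η)) * Real.exp (2 * η) := by
              apply mul_le_mul_of_nonneg_left h1 (Real.exp_pos _).le
          _ = 1 := by rw [← Real.exp_add]; norm_num
      have hpos1 : (0:ℝ) < 1 - Real.exp (-(2 * η)) := by
        have : Real.exp (-(2 * η)) < 1 := Real.exp_lt_one_iff.2 (by linarith)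
        linarith
      rw [div_eq_inv_mul, mul_one, ← div_eq_mul_inv, div_le_iff₀ hpos1]
      have := Real.exp_pos (-(2 * η))
      rw [inv_eq_one_div, div_mul_eq_mul_div, le_div_iff₀ (by linarith : (0:ℝ) < 2 * η)]
      nlinarith
    calc (∑' n : ℕ, (‖q‖ ^ 2) ^ (n + 1) / 2)
        = (∑' n : ℕ, (‖q‖ ^ 2) ^ (n + 1)) / 2 := tsum_div_const
      _ = ‖q‖ ^ 2 * (1 - ‖q‖ ^ 2)⁻¹ / 2 := by rw [hsum2]
      _ ≤ (1 / (2 * η)) / 2 := by linarith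
      _ = 1 / (4 * η) := by ring
  -- final numeric comparison
  have hfinal : Real.pi / (20 * η) + 1 / (4 * η) < 41 / (50 * η) := by
    rw [div_add_div _ _ (by positivity : (20:ℝ) * η ≠ 0) (by positivity : (4:ℝ) * η ≠ 0),
      div_lt_div_iff₀ (by positivity) (by positivity)]
    have hpi : Real.pi < 3.15 := Real.pi_lt_d2
    nlinarith [mul_pos hη0 hη0, sq_nonneg η]
  rw [habs, Real.exp_lt_exp]
  calc (∑' n : ℕ, Real.log (‖1 + q ^ (n + 1)‖))
      ≤ (∑' n : ℕ, (q ^ (n + 1)).re) + ∑' n : ℕ, (‖q‖ ^ 2) ^ (n + 1) / 2 := hle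
    _ ≤ Real.pi / (20 * η) + 1 / (4 * η) := add_le_add hT1 hT2
    _ < 41 / (50 * η) := hfinal
end

section
/- Let η and y be real numbers with 0 < η < π/80 and 10η ≤ |y| < π. Then | 1 − e^{−(η + iy)} | > √95 · η; in particular, 1 − 2 cos(10η) e^{−η} + e^{−2η} > 95 η² for all 0 < η < π/80. -/
set_option maxHeartbeats 1000000 in
lemma key18 (t : ℝ) (h0 : 0 < t) (h1 : t < Real.pi / 80) :
    95 * t ^ 2 < 1 - 2 * Real.cos (10 * t) * Real.exp (-t) + Real.exp (-2 * t) := by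
  have hπ : Real.pi < 3.15 := by linarith [Real.pi_lt_d2]
  have ht : t < 0.04 := by nlinarith
  have he1 : 1 - t ≤ Real.exp (-t) := by linarith [Real.add_one_le_exp (-t)]
  have hpos : (0 : ℝ) < 1 + t := by linarith
  have he2 : Real.exp (-t) ≤ 1 - t + t ^ 2 := by
    rw [Real.exp_neg]
    have h2 : (Real.exp t)⁻¹ ≤ (1 + t)⁻¹ := by
      apply inv_anti₀ hpos
      linarith [Real.add_one_le_exp t]
    have h3 : (1 + t)⁻¹ ≤ 1 - t + t ^ 2 := by
      rw [inv_le_iff_one_le_mul₀ hpos]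
      nlinarith
    linarith
  have he3 : Real.exp (-2 * t) = Real.exp (-t) ^ 2 := by
    rw [sq, ← Real.exp_add]; ring_nf
  have hc : |Real.cos (10 * t) - (1 - (10 * t) ^ 2 / 2)| ≤ |10 * t| ^ 4 * (5 / 96) :=
    Real.cos_bound (by rw [abs_of_pos (by linarith)]; linarith)
  have hc2 : Real.cos (10 * t) ≤ 1 - 50 * t ^ 2 + (3125 / 6) * t ^ 4 := by
    rw [abs_of_pos (show (0:ℝ) < 10 * t by linarith)] at hc
    have := abs_le.mp hc
    nlinarith [this.2]
  have hE0 : 0 < Real.exp (-t) := Real.exp_pos _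
  clear hc h1
  set E := Real.exp (-t) with hE
  set C := Real.cos (10 * t) with hC
  have ht2 : t ^ 2 < 0.0016 := by nlinarith
  have ht4 : t ^ 4 ≤ 0.0016 * t ^ 2 := by nlinarith [sq_nonneg t]
  have hXnn : 0 ≤ 50 * t ^ 2 - 3125 / 6 * t ^ 4 := by nlinarith [sq_nonneg t]
  have h1C : 50 * t ^ 2 - 3125 / 6 * t ^ 4 ≤ 1 - C := by linarith
  have ha : 0 ≤ t - t ^ 2 := by nlinarith
  have hb : t - t ^ 2 ≤ 1 - E := by linarith
  have hq1 : (t - t ^ 2) ^ 2 ≤ (1 - E) ^ 2 := by nlinarith [ha, hb]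
  have hq2 : (1 - t) * (50 * t ^ 2 - 3125 / 6 * t ^ 4) ≤ E * (1 - C) :=
    mul_le_mul he1 h1C hXnn hE0.le
  have hid : 1 - 2 * C * E + E ^ 2 = (1 - E) ^ 2 + 2 * (E * (1 - C)) := by ring
  rw [he3, hid]
  have ht3 : t ^ 3 ≤ 0.04 * t ^ 2 := by nlinarith [sq_nonneg t]
  have ht5 : 0 ≤ t ^ 5 := by positivity
  have hfin : 95 * t ^ 2 < (t - t ^ 2) ^ 2 + 2 * ((1 - t) * (50 * t ^ 2 - 3125 / 6 * t ^ 4)) := by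
    nlinarith [ht3, ht4, ht5, mul_pos h0 h0]
  linarith [hq1, hq2, hfin]

theorem stmt18 (η y : ℝ) (hη0 : 0 < η) (hη : η < Real.pi / 80)
    (hy1 : 10 * η ≤ |y|) (hy2 : |y| < Real.pi) :
    Real.sqrt 95 * η < ‖1 - Complex.exp (-((η : ℂ) + Complex.I * (y : ℂ)))‖ ∧
      ∀ η' : ℝ, 0 < η' → η' < Real.pi / 80 →
        95 * η' ^ 2 < 1 - 2 * Real.cos (10 * η') * Real.exp (-η') + Real.exp (-2 * η') := by
  refine ⟨?_, fun η' h0 h1 => key18 η' h0 h1⟩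
  set z : ℂ := -((η : ℂ) + Complex.I * (y : ℂ)) with hzdef
  have hre : z.re = -η := by simp [hzdef]
  have him : z.im = -y := by simp [hzdef]
  have h1 : Real.sin y ^ 2 + Real.cos y ^ 2 = 1 := Real.sin_sq_add_cos_sq y
  have hA2 : ‖1 - Complex.exp z‖ ^ 2
      = 1 - 2 * Real.exp (-η) * Real.cos y + Real.exp (-η) ^ 2 := by
    rw [Complex.sq_norm, Complex.normSq_apply]
    simp only [Complex.sub_re, Complex.sub_im, Complex.one_re, Complex.one_im,
      Complex.exp_re, Complex.exp_im, hre, him, Real.cos_neg, Real.sin_neg]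
    linear_combination Real.exp (-η) ^ 2 * h1
  have hcos : Real.cos y ≤ Real.cos (10 * η) := by
    rw [← Real.cos_abs y]
    exact Real.cos_le_cos_of_nonneg_of_le_pi (by linarith) (by linarith) hy1
  have hE0 : (0 : ℝ) < Real.exp (-η) := Real.exp_pos _
  have he3 : Real.exp (-2 * η) = Real.exp (-η) ^ 2 := by
    rw [sq, ← Real.exp_add]; ring_nf
  have hkey := key18 η hη0 hη
  have hA2' : 95 * η ^ 2 < ‖1 - Complex.exp z‖ ^ 2 := by
    rw [hA2]; rw [he3] at hkey; nlinarith
  have hAnn : 0 ≤ ‖1 - Complex.exp z‖ := norm_nonneg _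
  have hs : Real.sqrt 95 ^ 2 = 95 := Real.sq_sqrt (by norm_num)
  have hsnn : 0 ≤ Real.sqrt 95 := Real.sqrt_nonneg _
  nlinarith
end

section
/- For every integer n ≥ 0, | (1 − 2^{n+1}) B_{n+1} / (n+1) | / n! ≤ (π/3) · π^{−n}, where B_k denotes the k-th Bernoulli number. (The left-hand side equals |e_n|/n!, where e_n := E_n(0)/2 are the Taylor coefficients of E(z) = e^{−z}/(1 + e^{−z}) = Σ_{n≥0} (e_n/n!) zⁿ.) -/
open Real

theorem stmt19 (n : ℕ) :
    |(1 - 2 ^ (n + 1)) * ((bernoulli (n + 1) : ℚ) : ℝ) / ((n : ℝ) + 1)| / (Nat.factorial n : ℝ)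
      ≤ (Real.pi / 3) * (1 / Real.pi) ^ n := by
  have hπ := Real.pi_pos
  rcases Nat.even_or_odd n with he | ho
  · rcases Nat.eq_zero_or_pos n with rfl | hn
    · have h1 : bernoulli 1 = -1/2 := bernoulli_one
      simp [h1]
      rw [abs_of_nonpos (by norm_num : (1:ℝ) - 2 ≤ 0), abs_of_nonpos (by norm_num : (-1/2:ℝ) ≤ 0)]
      have := Real.pi_gt_three
      norm_num
      linarith
    · have hb : bernoulli (n+1) = 0 := by
        rw [bernoulli_eq_bernoulli'_of_ne_one (by omega)]
        exact bernoulli'_eq_zero_of_odd (Even.add_one he) (by omega)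
      rw [hb]
      simp
      positivity
  · obtain ⟨k, rfl⟩ := ho
    have hs := hasSum_zeta_nat (k := k+1) (Nat.succ_ne_zero k)
    set S : ℝ := ∑' m : ℕ, 1 / (m : ℝ) ^ (2 * (k+1)) with hSdef
    have hS0 : 0 ≤ S := tsum_nonneg fun m => by positivity
    have hSle : S ≤ π ^ 2 / 6 := by
      rw [← hasSum_zeta_two.tsum_eq]
      apply Summable.tsum_le_tsum _ hs.summable hasSum_zeta_two.summable
      intro i
      rcases Nat.eq_zero_or_pos i with rfl | hi
      · simp
      · apply one_div_le_one_div_of_le (by positivity)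
        exact pow_le_pow_right₀ (by exact_mod_cast hi) (by omega)
    have hBabs : |((bernoulli (2*(k+1)) : ℚ) : ℝ)|
        = S * ((2*(k+1)).factorial : ℝ) / (2 ^ (2*(k+1)-1) * π ^ (2*(k+1))) := by
      have habs := congrArg abs hs.tsum_eq
      rw [← hSdef, abs_of_nonneg hS0, abs_div, abs_mul, abs_mul, abs_mul, abs_pow, abs_neg,
        abs_one, one_pow, one_mul, abs_pow, abs_pow, abs_two, abs_of_nonneg hπ.le,
        Nat.abs_cast] at habs
      have hF : (0:ℝ) < ((2*(k+1)).factorial : ℝ) := by positivity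
      field_simp at habs ⊢
      linarith [habs]
    have hsub : 2*(k+1)-1 = 2*k+1 := by omega
    have hfac : ((2*(k+1)).factorial : ℝ) = (((2*k+1:ℕ):ℝ)+1) * ((2*k+1).factorial : ℝ) := by
      rw [show 2*(k+1) = (2*k+1)+1 by ring, Nat.factorial_succ]
      push_cast; ring
    have hLHS : |(1 - 2 ^ (2*k+1+1)) * ((bernoulli (2*k+1+1) : ℚ) : ℝ) / (((2*k+1:ℕ) : ℝ) + 1)|
          / ((2*k+1).factorial : ℝ)
        = (2^(2*(k+1)) - 1) * S / (2^(2*k+1) * π^(2*(k+1))) := by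
      rw [show 2*k+1+1 = 2*(k+1) by ring, abs_div, abs_mul, hBabs, hsub,
        abs_of_nonpos (by nlinarith [one_le_pow₀ (by norm_num : (1:ℝ) ≤ 2) (n := 2*(k+1))] : (1:ℝ) - 2^(2*(k+1)) ≤ 0),
        abs_of_nonneg (by positivity : (0:ℝ) ≤ ((2*k+1:ℕ):ℝ)+1), hfac]
      have h1 : (0:ℝ) < ((2*k+1:ℕ):ℝ)+1 := by positivity
      have h2 : (0:ℝ) < ((2*k+1).factorial : ℝ) := by positivity
      field_simp
      ring
    rw [hLHS]
    calc (2^(2*(k+1)) - 1) * S / (2^(2*k+1) * π^(2*(k+1)))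
        ≤ 2^(2*(k+1)) * (π^2/6) / (2^(2*k+1) * π^(2*(k+1))) := by
          gcongr
          · linarith [pow_pos (by norm_num : (0:ℝ) < 2) (2*(k+1))]
      _ = π/3 * (1/π)^(2*k+1) := by
          rw [show 2*(k+1) = (2*k+1)+1 by ring, pow_succ (2:ℝ), pow_succ π]
          rw [div_pow, one_pow]
          field_simp
          ring
end
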